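/- arXiv:2408.15962 — 4 statements merged into one kernel-verified Lean document; each statement's English description precedes it below -/
import Mathlib

section
/- Suppose β(ω) < ∞ and E ∈ ℝ, and let C > 1 be a constant (depending only on ω and v) for which the large deviation estimate holds: for every δ ∈ (0, 1/(β(ω)+1)) and all sufficiently large m, the Lebesgue measure of {θ ∈ 𝕋 : |u_{m,E}(θ) − L_m(ω,E)| > 2·κ(ω,E)·β(ω) + C·δ} is at most e^{−δ⁴·m}. Then for every δ ∈ (0, 1/(β(ω)+1)) there is m₀ such that for all m ≥ m₀ and every real η with |η| ≤ exp(−2m·(κ(ω,E)·β(ω) + 2C·δ)), the Lebesgue measure of the set {θ ∈ 𝕋 : u_{m,E+iη}(θ) < L(ω,E) − 2·κ(ω,E)·β(ω) − 2C·δ} is at most e^{−δ⁴·m}. -/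
open MeasureTheory Filter

noncomputable section

/-- Distance from `x` to the nearest integer. -/
def distZ (x : ℝ) : ℝ := |x - round x|

/-- One-step transfer matrix. -/
def oneStep (v : ℂ → ℂ) (E : ℂ) (z : ℂ) : Matrix (Fin 2) (Fin 2) ℂ :=
  !![E - v z, -1; 1, 0]

/-- `m`-step transfer matrix. -/
def transfer (v : ℂ → ℂ) (ω : ℝ) (E : ℂ) : ℕ → ℂ → Matrix (Fin 2) (Fin 2) ℂ
  | 0, _ => 1
  | m + 1, z => transfer v ω E m (z + (ω : ℂ)) * oneStep v E z

/-- Operator (`ℓ²`) norm of a 2×2 complex matrix. -/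
def opNorm2 (A : Matrix (Fin 2) (Fin 2) ℂ) : ℝ :=
  ‖Matrix.toEuclideanCLM (𝕜 := ℂ) A‖

/-- `u_{m,E}` at a (complexified) phase. -/
def uFun (v : ℂ → ℂ) (ω : ℝ) (E : ℂ) (m : ℕ) (z : ℂ) : ℝ :=
  (1 / (m : ℝ)) * Real.log (opNorm2 (transfer v ω E m z))

/-- Finite-scale Lyapunov exponent `L_m(ω,E,ε)`. -/
def LyapFS (v : ℂ → ℂ) (ω : ℝ) (E : ℂ) (m : ℕ) (ε : ℝ) : ℝ :=
  ∫ θ in (0:ℝ)..1, uFun v ω E m ((θ : ℂ) + (ε : ℂ) * Complex.I)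

/-- Lyapunov exponent `L(ω,E,ε)` (limit of `L_m`, realized as a `limsup`). -/
def Lyap (v : ℂ → ℂ) (ω : ℝ) (E : ℂ) (ε : ℝ) : ℝ :=
  limsup (fun m : ℕ => LyapFS v ω E m ε) atTop

/-- Avila's acceleration `κ(ω,E)` (right derivative at `ε = 0`, realized as a limsup). -/
def accel (v : ℂ → ℂ) (ω : ℝ) (E : ℂ) : ℝ :=
  limsup (fun ε : ℝ => (Lyap v ω E ε - Lyap v ω E 0) / (2 * Real.pi * ε))
    (nhdsWithin 0 (Set.Ioi 0))

/-- Gauss map. -/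
def gaussMap (x : ℝ) : ℝ := Int.fract x⁻¹

/-- Partial quotients of the continued fraction of `ω`; `cfA ω n = aₙ` for `n ≥ 1`. -/
def cfA (ω : ℝ) (n : ℕ) : ℕ := ⌊(gaussMap^[n - 1] ω)⁻¹⌋₊

/-- Denominators of the continued fraction approximants of `ω`. -/
def cfQ (ω : ℝ) : ℕ → ℕ
  | 0 => 1
  | 1 => cfA ω 1
  | n + 2 => cfA ω (n + 2) * cfQ ω (n + 1) + cfQ ω n

/-- `β(ω) = limsup (log q_{n+1})/q_n`, as an extended real. -/
def betaE (ω : ℝ) : EReal :=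
  limsup (fun n : ℕ => ((Real.log (cfQ ω (n + 1)) / (cfQ ω n : ℝ) : ℝ) : EReal)) atTop

/-- Real value of `β(ω)`. -/
def betaR (ω : ℝ) : ℝ := (betaE ω).toReal

/-- `k`-th Fourier coefficient of a function on `𝕋 = ℝ/ℤ`. -/
def fourierCoeff01 (g : ℝ → ℂ) (k : ℤ) : ℂ :=
  ∫ θ in (0:ℝ)..1, g θ * Complex.exp (-2 * Real.pi * Complex.I * (k : ℂ) * (θ : ℂ))

/-- `k`-th Fourier coefficient of `u_{m,E}`. -/
def uhat (v : ℂ → ℂ) (ω : ℝ) (E : ℂ) (m : ℕ) (k : ℤ) : ℂ :=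
  fourierCoeff01 (fun θ : ℝ => ((uFun v ω E m (θ : ℂ) : ℝ) : ℂ)) k

/-- Fejér kernel along `ω`. -/
def fejer (ω : ℝ) (Q : ℕ) (k : ℤ) : ℂ :=
  ∑ j ∈ Finset.Ioo (-(Q : ℤ)) (Q : ℤ),
    ((((Q : ℝ) - |(j : ℝ)|) / (Q : ℝ) ^ 2 : ℝ) : ℂ) *
      Complex.exp (2 * Real.pi * Complex.I * (k : ℂ) * (j : ℂ) * (ω : ℂ))

/-- Open annulus `𝒜_R`. -/
def annulus (R : ℝ) : Set ℂ := {z : ℂ | 1 / R < ‖z‖ ∧ ‖z‖ < R}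

/-- Closed annulus. -/
def closedAnnulus (R : ℝ) : Set ℂ := {z : ℂ | 1 / R ≤ ‖z‖ ∧ ‖z‖ ≤ R}

/-- Regular part `Γ_R` of the Green's function of the annulus `𝒜_R`. -/
def GammaR (R : ℝ) (z w : ℂ) : ℝ :=
  Real.log (‖z‖ / R) * Real.log (‖w‖ / R) / (4 * Real.pi * Real.log R)
    + (1 / (2 * Real.pi)) * Real.log
      ((∏' k : ℕ, (‖1 - (R : ℂ) ^ (-(4 * ((k : ℤ) + 1))) * z / w‖
          * ‖1 - (R : ℂ) ^ (-(4 * ((k : ℤ) + 1))) * w / z‖))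
        / (R * ∏' k : ℕ, (‖1 - (R : ℂ) ^ (-(4 * ((k : ℤ) + 1) - 2)) * w * (starRingEnd ℂ) z‖
          * ‖1 - (R : ℂ) ^ (-(4 * ((k : ℤ) + 1) - 2)) / ((starRingEnd ℂ) z * w)‖)))

/-- Green's function `G_R` of the annulus `𝒜_R`. -/
def greenR (R : ℝ) (z w : ℂ) : ℝ :=
  (1 / (2 * Real.pi)) * Real.log (‖z - w‖) + GammaR R z w

/-- Second directional derivative of `f : ℂ → ℝ` at `z` in direction `v`. -/
def secondDirDeriv (f : ℂ → ℝ) (v z : ℂ) : ℝ :=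
  deriv (deriv (fun t : ℝ => f (z + t • v))) 0

/-- Harmonicity of `f` on a set `S ⊆ ℂ`. -/
def HarmonicOnSet (f : ℂ → ℝ) (S : Set ℂ) : Prop :=
  ContDiffOn ℝ 2 f S ∧ ∀ z ∈ S, secondDirDeriv f 1 z + secondDirDeriv f Complex.I z = 0

/-! ### Auxiliary lemmas -/

namespace LDEaux

open Polynomial

/-- Jacobi (characteristic) polynomials attached to the transfer matrix cocycle. -/
noncomputable def jacP (v : ℂ → ℂ) (ω : ℝ) : ℕ → ℝ → Polynomial ℂ
  | 0, _ => 1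
  | 1, θ => X - C (v (θ : ℂ))
  | (n+2), θ => (X - C (v (θ : ℂ))) * jacP v ω (n+1) (θ + ω) - jacP v ω n (θ + 2*ω)

variable {v : ℂ → ℂ} {ω : ℝ}

lemma jacP_herglotz (hreal : ∀ x : ℝ, (v (x : ℂ)).im = 0) :
    ∀ (n : ℕ) (θ : ℝ) (z : ℂ), 0 < z.im →
      0 < ((jacP v ω (n+1) θ).eval z * (starRingEnd ℂ) ((jacP v ω n (θ+ω)).eval z)).im := by
  intro n
  induction n with
  | zero =>
    intro θ z hz
    simp [jacP, Complex.sub_im, hreal θ, hz]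
  | succ n IH =>
    intro θ z hz
    have harg : θ + ω + ω = θ + 2*ω := by ring
    set A := (jacP v ω (n+1) (θ+ω)).eval z with hA
    set B := (jacP v ω n (θ+2*ω)).eval z with hB
    have hIH : 0 < (A * (starRingEnd ℂ) B).im := by
      have := IH (θ+ω) z hz
      rwa [harg] at this
    have hstep : (jacP v ω (n+2) θ).eval z = (z - v (θ : ℂ)) * A - B := by
      simp [jacP, hA, hB]
    rw [show ((n:ℕ)+1+1) = n+2 from rfl, hstep]
    have hexp : ((z - v (θ : ℂ)) * A - B) * (starRingEnd ℂ) A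
        = (z - v (θ : ℂ)) * ((Complex.normSq A : ℝ) : ℂ) - B * (starRingEnd ℂ) A := by
      rw [← Complex.mul_conj]; ring
    rw [hexp]
    have h1 : ((z - v (θ : ℂ)) * ((Complex.normSq A : ℝ) : ℂ)).im
        = z.im * Complex.normSq A := by
      simp [Complex.mul_im, Complex.sub_im, Complex.sub_re, hreal θ]
    have h2 : B * (starRingEnd ℂ) A = (starRingEnd ℂ) (A * (starRingEnd ℂ) B) := by
      rw [map_mul, Complex.conj_conj]; ring
    rw [Complex.sub_im, h1, h2, Complex.conj_im]
    have : 0 ≤ z.im * Complex.normSq A :=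
      mul_nonneg hz.le (Complex.normSq_nonneg A)
    linarith

lemma jacP_ne_zero (hreal : ∀ x : ℝ, (v (x : ℂ)).im = 0)
    (n : ℕ) (θ : ℝ) (z : ℂ) (hz : 0 < z.im) : (jacP v ω n θ).eval z ≠ 0 := by
  cases n with
  | zero => simp [jacP]
  | succ n =>
    intro h0
    have := jacP_herglotz (ω := ω) hreal n θ z hz
    rw [h0] at this
    simp at this

lemma jacP_conj (hreal : ∀ x : ℝ, (v (x : ℂ)).im = 0) :
    ∀ (n : ℕ) (θ : ℝ) (z : ℂ),
      (jacP v ω n θ).eval ((starRingEnd ℂ) z) = (starRingEnd ℂ) ((jacP v ω n θ).eval z)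
  | 0, θ, z => by simp [jacP]
  | 1, θ, z => by
      have hv : (starRingEnd ℂ) (v (θ : ℂ)) = v (θ : ℂ) :=
        Complex.conj_eq_iff_im.mpr (hreal θ)
      simp [jacP, hv]
  | (n+2), θ, z => by
      have hv : (starRingEnd ℂ) (v (θ : ℂ)) = v (θ : ℂ) :=
        Complex.conj_eq_iff_im.mpr (hreal θ)
      simp [jacP, jacP_conj hreal (n+1), jacP_conj hreal n, hv]

lemma jacP_ne_zero' (hreal : ∀ x : ℝ, (v (x : ℂ)).im = 0)
    (n : ℕ) (θ : ℝ) (z : ℂ) (hz : z.im ≠ 0) : (jacP v ω n θ).eval z ≠ 0 := by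
  rcases hz.lt_or_gt with h | h
  · have hz' : 0 < ((starRingEnd ℂ) z).im := by simpa [Complex.conj_im] using h
    have h1 := jacP_ne_zero (ω := ω) hreal n θ _ hz'
    rw [jacP_conj hreal] at h1
    simpa using h1
  · exact jacP_ne_zero hreal n θ z h

lemma multiset_prod_le (s : Multiset ℂ) (f g : ℂ → ℝ)
    (h : ∀ r ∈ s, 0 ≤ f r ∧ f r ≤ g r) :
    (s.map f).prod ≤ (s.map g).prod := by
  induction s using Multiset.induction_on with
  | empty => simp
  | cons a s IH =>
    simp only [Multiset.map_cons, Multiset.prod_cons]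
    have ha := h a (Multiset.mem_cons_self a s)
    have hs : ∀ r ∈ s, 0 ≤ f r ∧ f r ≤ g r := fun r hr => h r (Multiset.mem_cons_of_mem hr)
    have hfs : 0 ≤ (s.map f).prod := by
      apply Multiset.prod_nonneg
      intro x hx
      rcases Multiset.mem_map.mp hx with ⟨r, hr, rfl⟩
      exact (hs r hr).1
    have hga : 0 ≤ g a := le_trans ha.1 ha.2
    exact mul_le_mul ha.2 (IH hs) hfs hga

lemma abs_eval_le (p : Polynomial ℂ)
    (hnv : ∀ z : ℂ, z.im ≠ 0 → p.eval z ≠ 0) (E η : ℝ) :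
    ‖p.eval (E : ℂ)‖ ≤ ‖p.eval ((E : ℂ) + (η : ℂ) * Complex.I)‖ := by
  have hsp : p.Splits := IsAlgClosed.splits p
  have hfac := hsp.eq_prod_roots
  have hev : ∀ w : ℂ, ‖p.eval w‖
      = ‖p.leadingCoeff‖ * (p.roots.map fun r => ‖w - r‖).prod := by
    intro w
    conv_lhs => rw [hfac]
    rw [Polynomial.eval_mul, Polynomial.eval_C, norm_mul]
    congr 1
    rw [Polynomial.eval_multiset_prod, Multiset.map_map]
    change (normHom : ℂ →*₀ ℝ) _ = _
    rw [map_multiset_prod, Multiset.map_map]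
    simp [Function.comp_def]
  rw [hev, hev]
  apply mul_le_mul_of_nonneg_left _ (norm_nonneg _)
  apply multiset_prod_le
  intro r hr
  refine ⟨norm_nonneg _, ?_⟩
  have hroot : p.eval r = 0 := (Polynomial.isRoot_of_mem_roots hr)
  have hrim : r.im = 0 := by
    by_contra him
    exact hnv r him hroot
  have h1 : Complex.normSq ((E : ℂ) - r) ≤ Complex.normSq ((E : ℂ) + (η : ℂ) * Complex.I - r) := by
    simp only [Complex.normSq_apply, Complex.sub_re, Complex.sub_im, Complex.add_re,
      Complex.add_im, Complex.mul_re, Complex.mul_im, Complex.ofReal_re, Complex.ofReal_im,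
      Complex.I_re, Complex.I_im, hrim]
    ring_nf
    nlinarith [sq_nonneg η]
  rw [Complex.norm_def, Complex.norm_def]
  exact Real.sqrt_le_sqrt h1

lemma transfer_eq_jacP (v : ℂ → ℂ) (ω : ℝ) (z : ℂ) :
    ∀ (n : ℕ) (θ : ℝ),
      transfer v ω z (n+2) ((θ : ℝ) : ℂ) =
        !![(jacP v ω (n+2) θ).eval z, -((jacP v ω (n+1) (θ+ω)).eval z);
           (jacP v ω (n+1) θ).eval z, -((jacP v ω n (θ+ω)).eval z)] := by
  intro n
  induction n with
  | zero =>
    intro θ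
    have h1 : ((θ : ℂ) + (ω : ℂ)) = (((θ + ω : ℝ)) : ℂ) := by push_cast; ring
    have e1 : ∀ w : ℂ, transfer v ω z 1 w = oneStep v z w := by
      intro w
      show transfer v ω z 0 (w + (ω : ℂ)) * oneStep v z w = _
      rw [show transfer v ω z 0 (w + (ω : ℂ)) = 1 from rfl, one_mul]
    have e2 : transfer v ω z 2 ((θ : ℝ) : ℂ)
        = transfer v ω z 1 ((θ : ℂ) + (ω : ℂ)) * oneStep v z ((θ : ℝ) : ℂ) := rfl
    rw [e2, e1, h1]
    have hj2 : jacP v ω 2 θ = (X - C (v (θ : ℂ))) * jacP v ω 1 (θ+ω) - jacP v ω 0 (θ+2*ω) := rfl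
    have hj1 : ∀ t : ℝ, jacP v ω 1 t = X - C (v (t : ℂ)) := fun _ => rfl
    have hj0 : ∀ t : ℝ, jacP v ω 0 t = (1 : Polynomial ℂ) := fun _ => rfl
    ext i j
    fin_cases i <;> fin_cases j <;>
      simp [oneStep, Matrix.mul_apply, Fin.sum_univ_two, hj2, hj1, hj0] <;> ring
  | succ n IH =>
    intro θ
    have h1 : ((θ : ℂ) + (ω : ℂ)) = (((θ + ω : ℝ)) : ℂ) := by push_cast; ring
    have h2 : θ + ω + ω = θ + 2*ω := by ring
    have hT : transfer v ω z (n+3) ((θ : ℝ) : ℂ)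
        = transfer v ω z (n+2) (((θ + ω : ℝ)) : ℂ) * oneStep v z ((θ : ℝ) : ℂ) := by
      rw [show (n+3) = (n+2)+1 from rfl]
      rw [show (transfer v ω z ((n+2)+1) ((θ : ℝ) : ℂ))
          = transfer v ω z (n+2) (((θ:ℝ):ℂ) + (ω : ℂ)) * oneStep v z ((θ : ℝ) : ℂ) from rfl, h1]
    rw [hT, IH (θ + ω), h2]
    have hrec1 : (jacP v ω (n+3) θ) = (X - C (v (θ : ℂ))) * jacP v ω (n+2) (θ + ω)
        - jacP v ω (n+1) (θ + 2*ω) := rfl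
    have hrec2 : (jacP v ω (n+2) θ) = (X - C (v (θ : ℂ))) * jacP v ω (n+1) (θ + ω)
        - jacP v ω n (θ + 2*ω) := rfl
    ext i j
    fin_cases i <;> fin_cases j <;>
      simp [oneStep, Matrix.mul_apply, Fin.sum_univ_two, hrec1, hrec2] <;> ring

lemma coord_le_norm (x : EuclideanSpace ℂ (Fin 2)) (i : Fin 2) : ‖x i‖ ≤ ‖x‖ := by
  rw [EuclideanSpace.norm_eq]
  have h1 : ‖x i‖^2 ≤ ∑ j, ‖x j‖^2 :=
    Finset.single_le_sum (f := fun j => ‖x j‖^2) (fun j _ => sq_nonneg _) (Finset.mem_univ i)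
  calc ‖x i‖ = Real.sqrt (‖x i‖^2) := (Real.sqrt_sq (norm_nonneg _)).symm
  _ ≤ _ := Real.sqrt_le_sqrt h1

lemma sqrt_sq_add_sq_le (a b : ℝ) (ha : 0 ≤ a) (hb : 0 ≤ b) :
    Real.sqrt (a^2 + b^2) ≤ a + b := by
  have h := Real.sqrt_le_sqrt (show a^2 + b^2 ≤ (a+b)^2 by nlinarith)
  rwa [Real.sqrt_sq (by positivity)] at h

lemma entry_le_opNorm2 (A : Matrix (Fin 2) (Fin 2) ℂ) (i j : Fin 2) :
    ‖A i j‖ ≤ opNorm2 A := by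
  set f := Matrix.toEuclideanCLM (𝕜 := ℂ) A
  have h1 : f (EuclideanSpace.single j (1:ℂ)) i = A i j := by
    show (Matrix.toEuclideanCLM (𝕜 := ℂ) A (EuclideanSpace.single j (1:ℂ))) i = A i j
    rw [Matrix.ofLp_toEuclideanCLM]
    simp [PiLp.ofLp_single]
  calc ‖A i j‖ = ‖f (EuclideanSpace.single j (1:ℂ)) i‖ := by
        rw [h1]
  _ ≤ ‖f (EuclideanSpace.single j (1:ℂ))‖ := coord_le_norm _ i
  _ ≤ ‖f‖ * ‖EuclideanSpace.single j (1:ℂ)‖ := f.le_opNorm _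
  _ = opNorm2 A := by simp [opNorm2, f]

lemma opNorm2_le_sum (A : Matrix (Fin 2) (Fin 2) ℂ) :
    opNorm2 A ≤ ‖A 0 0‖ + ‖A 0 1‖
      + ‖A 1 0‖ + ‖A 1 1‖ := by
  apply ContinuousLinearMap.opNorm_le_bound _ (by positivity)
  intro x
  set f := Matrix.toEuclideanCLM (𝕜 := ℂ) A
  have hcoord : ∀ i : Fin 2, f x i = A i 0 * x 0 + A i 1 * x 1 := by
    intro i
    show (Matrix.toEuclideanCLM (𝕜 := ℂ) A x) i = _
    rw [Matrix.ofLp_toEuclideanCLM]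
    simp [Matrix.mulVec, dotProduct, Fin.sum_univ_two]
  have hnorm : ‖f x‖ = Real.sqrt (‖f x 0‖^2 + ‖f x 1‖^2) := by
    rw [EuclideanSpace.norm_eq, Fin.sum_univ_two]
  have hb : ∀ i : Fin 2, ‖f x i‖ ≤ (‖A i 0‖ + ‖A i 1‖) * ‖x‖ := by
    intro i
    rw [hcoord i]
    calc ‖A i 0 * x 0 + A i 1 * x 1‖ ≤ ‖A i 0 * x 0‖ + ‖A i 1 * x 1‖ := norm_add_le _ _
    _ = ‖A i 0‖ * ‖x 0‖ + ‖A i 1‖ * ‖x 1‖ := by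
        simp [map_mul]
    _ ≤ ‖A i 0‖ * ‖x‖ + ‖A i 1‖ * ‖x‖ := by
        gcongr <;> first
          | exact norm_nonneg _
          | exact coord_le_norm x _
    _ = (‖A i 0‖ + ‖A i 1‖) * ‖x‖ := by ring
  calc ‖f x‖ ≤ ‖f x 0‖ + ‖f x 1‖ := by
        rw [hnorm]; exact sqrt_sq_add_sq_le _ _ (norm_nonneg _) (norm_nonneg _)
  _ ≤ (‖A 0 0‖ + ‖A 0 1‖) * ‖x‖
      + (‖A 1 0‖ + ‖A 1 1‖) * ‖x‖ := add_le_add (hb 0) (hb 1)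
  _ = (‖A 0 0‖ + ‖A 0 1‖
      + ‖A 1 0‖ + ‖A 1 1‖) * ‖x‖ := by ring

lemma opNorm2_nonneg (A : Matrix (Fin 2) (Fin 2) ℂ) : 0 ≤ opNorm2 A := norm_nonneg _

lemma opNorm2_mul_le (A B : Matrix (Fin 2) (Fin 2) ℂ) :
    opNorm2 (A * B) ≤ opNorm2 A * opNorm2 B := by
  unfold opNorm2
  rw [map_mul]
  exact norm_mul_le _ _

lemma opNorm2_one : opNorm2 (1 : Matrix (Fin 2) (Fin 2) ℂ) = 1 := by
  unfold opNorm2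
  rw [map_one]
  exact norm_one

lemma half_le_opNorm2 (A : Matrix (Fin 2) (Fin 2) ℂ) (hdet : A.det = 1) :
    (1:ℝ)/2 ≤ opNorm2 A := by
  have hd : A 0 0 * A 1 1 - A 0 1 * A 1 0 = 1 := by
    rw [← Matrix.det_fin_two]; exact hdet
  have h1 : (1:ℝ) = ‖A 0 0 * A 1 1 - A 0 1 * A 1 0‖ := by rw [hd]; simp
  have h2 : ‖A 0 0 * A 1 1 - A 0 1 * A 1 0‖
      ≤ ‖A 0 0‖ * ‖A 1 1‖ + ‖A 0 1‖ * ‖A 1 0‖ := by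
    calc ‖A 0 0 * A 1 1 - A 0 1 * A 1 0‖
        ≤ ‖A 0 0 * A 1 1‖ + ‖A 0 1 * A 1 0‖ := by
          exact (norm_sub_le _ _)
    _ = _ := by rw [norm_mul, norm_mul]
  have e00 := entry_le_opNorm2 A 0 0
  have e01 := entry_le_opNorm2 A 0 1
  have e10 := entry_le_opNorm2 A 1 0
  have e11 := entry_le_opNorm2 A 1 1
  have n00 := norm_nonneg (A 0 0)
  have n01 := norm_nonneg (A 0 1)
  have n10 := norm_nonneg (A 1 0)
  have n11 := norm_nonneg (A 1 1)
  nlinarith [opNorm2_nonneg A]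

lemma det_transfer (v : ℂ → ℂ) (ω : ℝ) (z : ℂ) :
    ∀ (m : ℕ) (w : ℂ), (transfer v ω z m w).det = 1 := by
  intro m
  induction m with
  | zero => intro w; simp [transfer]
  | succ m IH =>
    intro w
    show (transfer v ω z m (w + (ω:ℂ)) * oneStep v z w).det = 1
    rw [Matrix.det_mul, IH]
    simp [oneStep, Matrix.det_fin_two_of]

/-! ### Continuity, periodicity, subadditivity -/

/-- The log-norm integrand. -/
noncomputable def gFun (v : ℂ → ℂ) (ω : ℝ) (z : ℂ) (m : ℕ) (θ : ℝ) : ℝ :=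
  Real.log (opNorm2 (transfer v ω z m ((θ : ℝ) : ℂ)))

/-- The sequence of integrals. -/
noncomputable def aSeq (v : ℂ → ℂ) (ω : ℝ) (z : ℂ) (m : ℕ) : ℝ :=
  ∫ θ in (0:ℝ)..1, gFun v ω z m θ

variable {v : ℂ → ℂ} {ω : ℝ} {z : ℂ}

lemma half_le_opNorm2_transfer (m : ℕ) (w : ℂ) :
    (1:ℝ)/2 ≤ opNorm2 (transfer v ω z m w) :=
  half_le_opNorm2 _ (det_transfer v ω z m w)

lemma opNorm2_transfer_pos (m : ℕ) (w : ℂ) : 0 < opNorm2 (transfer v ω z m w) :=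
  lt_of_lt_of_le (by norm_num) (half_le_opNorm2_transfer m w)

lemma continuous_opNorm2 : Continuous (opNorm2 : Matrix (Fin 2) (Fin 2) ℂ → ℝ) := by
  have hL : Continuous fun A : Matrix (Fin 2) (Fin 2) ℂ => Matrix.toEuclideanCLM (𝕜 := ℂ) A := by
    let L : Matrix (Fin 2) (Fin 2) ℂ →ₗ[ℂ]
        (EuclideanSpace ℂ (Fin 2) →L[ℂ] EuclideanSpace ℂ (Fin 2)) :=
      { toFun := fun A => Matrix.toEuclideanCLM (𝕜 := ℂ) A
        map_add' := fun a b => map_add _ a b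
        map_smul' := fun c a => map_smul _ c a }
    exact L.continuous_of_finiteDimensional
  exact hL.norm

lemma continuous_transfer (hvc : Continuous fun θ : ℝ => v ((θ : ℝ) : ℂ)) :
    ∀ m : ℕ, Continuous fun θ : ℝ => transfer v ω z m ((θ : ℝ) : ℂ) := by
  intro m
  induction m with
  | zero =>
    have : (fun θ : ℝ => transfer v ω z 0 ((θ : ℝ) : ℂ))
        = fun _ : ℝ => (1 : Matrix (Fin 2) (Fin 2) ℂ) := rfl
    rw [this]; exact continuous_const
  | succ m IH =>
    have h1 : (fun θ : ℝ => transfer v ω z (m+1) ((θ : ℝ) : ℂ))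
        = fun θ : ℝ => transfer v ω z m (((θ + ω : ℝ)) : ℂ) * oneStep v z ((θ : ℝ) : ℂ) := by
      funext θ
      show transfer v ω z m ((θ:ℂ) + (ω:ℂ)) * oneStep v z ((θ:ℝ):ℂ) = _
      congr 2
      push_cast; ring
    rw [h1]
    have hc1 : Continuous fun θ : ℝ => transfer v ω z m (((θ + ω : ℝ)) : ℂ) :=
      IH.comp (continuous_id.add continuous_const)
    have hc2 : Continuous fun θ : ℝ => oneStep v z ((θ : ℝ) : ℂ) := by
      apply continuous_matrix
      intro i j
      fin_cases i <;> fin_cases j <;> simp [oneStep] <;>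
        first
          | exact Continuous.sub continuous_const hvc
          | exact continuous_const
    exact hc1.matrix_mul hc2

lemma continuous_gFun (hvc : Continuous fun θ : ℝ => v ((θ : ℝ) : ℂ)) (m : ℕ) :
    Continuous (gFun v ω z m) := by
  apply Continuous.log (continuous_opNorm2.comp (continuous_transfer hvc m))
  intro θ
  exact ne_of_gt (opNorm2_transfer_pos m _)

lemma transfer_periodic (hper : ∀ w : ℂ, v (w + 1) = v w) :
    ∀ (m : ℕ) (w : ℂ), transfer v ω z m (w + 1) = transfer v ω z m w := by
  intro m
  induction m with
  | zero => intro w; rfl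
  | succ m IH =>
    intro w
    show transfer v ω z m ((w+1) + (ω:ℂ)) * oneStep v z (w+1)
        = transfer v ω z m (w + (ω:ℂ)) * oneStep v z w
    rw [show (w+1) + (ω:ℂ) = (w + (ω:ℂ)) + 1 by ring, IH]
    congr 1
    simp only [oneStep, hper w]

lemma gFun_periodic (hper : ∀ w : ℂ, v (w + 1) = v w) (m : ℕ) :
    Function.Periodic (gFun v ω z m) 1 := by
  intro θ
  unfold gFun
  rw [show (((θ + 1 : ℝ)) : ℂ) = ((θ : ℝ) : ℂ) + 1 by push_cast; ring,
    transfer_periodic hper]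

lemma transfer_add :
    ∀ (n m : ℕ) (w : ℂ), transfer v ω z (m + n) w
      = transfer v ω z m (w + (n : ℂ) * (ω : ℂ)) * transfer v ω z n w := by
  intro n
  induction n with
  | zero =>
    intro m w
    simp only [Nat.add_zero, Nat.cast_zero, zero_mul, add_zero]
    rw [show transfer v ω z 0 w = 1 from rfl, mul_one]
  | succ n IH =>
    intro m w
    have e1 : transfer v ω z (m + (n+1)) w
        = transfer v ω z (m + n) (w + (ω:ℂ)) * oneStep v z w := rfl
    rw [e1, IH m (w + (ω:ℂ))]
    have e2 : transfer v ω z (n+1) w = transfer v ω z n (w + (ω:ℂ)) * oneStep v z w := rfl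
    rw [e2, show w + (ω:ℂ) + (n:ℂ) * (ω:ℂ) = w + ((n:ℕ)+1 : ℂ) * (ω:ℂ) by push_cast; ring,
      mul_assoc]
    norm_num

lemma gFun_subadd (m n : ℕ) (θ : ℝ) :
    gFun v ω z (m + n) θ ≤ gFun v ω z m (θ + n * ω) + gFun v ω z n θ := by
  unfold gFun
  set a := opNorm2 (transfer v ω z m (((θ + n * ω : ℝ)) : ℂ)) with ha
  set b := opNorm2 (transfer v ω z n ((θ : ℝ) : ℂ)) with hb
  have hpa : (0:ℝ) < a := opNorm2_transfer_pos m _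
  have hpb : (0:ℝ) < b := opNorm2_transfer_pos n _
  have hx : opNorm2 (transfer v ω z (m+n) ((θ:ℝ):ℂ)) ≤ a * b := by
    rw [transfer_add n m]
    refine le_trans (opNorm2_mul_le _ _) ?_
    rw [ha, show ((θ:ℝ):ℂ) + (n:ℂ) * (ω:ℂ) = (((θ + n * ω : ℝ)) : ℂ) by push_cast; ring]
  calc Real.log (opNorm2 (transfer v ω z (m+n) ((θ:ℝ):ℂ)))
      ≤ Real.log (a * b) := Real.log_le_log (opNorm2_transfer_pos _ _) hx
  _ = Real.log a + Real.log b := Real.log_mul (ne_of_gt hpa) (ne_of_gt hpb)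

lemma integral_gFun_shift (hper : ∀ w : ℂ, v (w + 1) = v w)
    (hvc : Continuous fun θ : ℝ => v ((θ : ℝ) : ℂ)) (m : ℕ) (c : ℝ) :
    ∫ θ in (0:ℝ)..1, gFun v ω z m (θ + c) = aSeq v ω z m := by
  rw [intervalIntegral.integral_comp_add_right (fun x => gFun v ω z m x) c]
  have h := (gFun_periodic (v := v) (ω := ω) (z := z) hper m).intervalIntegral_add_eq c 0
  rw [zero_add] at h
  rw [show (0:ℝ) + c = c by ring, show (1:ℝ) + c = c + 1 by ring, h]
  unfold aSeq
  norm_num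

lemma aSeq_subadditive (hper : ∀ w : ℂ, v (w + 1) = v w)
    (hvc : Continuous fun θ : ℝ => v ((θ : ℝ) : ℂ)) :
    Subadditive (aSeq v ω z) := by
  intro m n
  have hint1 : IntervalIntegrable (gFun v ω z (m+n)) volume 0 1 :=
    (continuous_gFun hvc (m+n)).intervalIntegrable _ _
  have hint2 : IntervalIntegrable (fun θ => gFun v ω z m (θ + n * ω) + gFun v ω z n θ)
      volume 0 1 :=
    (((continuous_gFun hvc m).comp (continuous_id.add continuous_const)).add
      (continuous_gFun hvc n)).intervalIntegrable _ _
  calc aSeq v ω z (m + n)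
      ≤ ∫ θ in (0:ℝ)..1, (gFun v ω z m (θ + n * ω) + gFun v ω z n θ) := by
        apply intervalIntegral.integral_mono_on (by norm_num) hint1 hint2
        intro θ _
        exact gFun_subadd m n θ
  _ = (∫ θ in (0:ℝ)..1, gFun v ω z m (θ + n * ω)) + ∫ θ in (0:ℝ)..1, gFun v ω z n θ := by
        apply intervalIntegral.integral_add
        · exact ((continuous_gFun hvc m).comp
            (continuous_id.add continuous_const)).intervalIntegrable _ _
        · exact (continuous_gFun hvc n).intervalIntegrable _ _
  _ = aSeq v ω z m + aSeq v ω z n := by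
        rw [integral_gFun_shift hper hvc m]
        rfl

lemma neg_log_two_le_aSeq (hvc : Continuous fun θ : ℝ => v ((θ : ℝ) : ℂ)) (m : ℕ) :
    -Real.log 2 ≤ aSeq v ω z m := by
  have h1 : ∀ θ ∈ Set.Icc (0:ℝ) 1, -Real.log 2 ≤ gFun v ω z m θ := by
    intro θ _
    have h0 := Real.log_le_log (by norm_num : (0:ℝ) < 1/2)
      (half_le_opNorm2_transfer (v := v) (ω := ω) (z := z) m ((θ:ℝ):ℂ))
    rw [show (1:ℝ)/2 = 2⁻¹ by norm_num, Real.log_inv] at h0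
    exact h0
  have h2 : (∫ _ in (0:ℝ)..1, (-Real.log 2 : ℝ)) ≤ aSeq v ω z m := by
    apply intervalIntegral.integral_mono_on (by norm_num)
      (intervalIntegrable_const) ((continuous_gFun hvc m).intervalIntegrable _ _) h1
  simpa using h2

lemma bddBelow_aSeq_div (hvc : Continuous fun θ : ℝ => v ((θ : ℝ) : ℂ)) :
    BddBelow (Set.range fun n : ℕ => aSeq v ω z n / n) := by
  refine ⟨-Real.log 2, ?_⟩
  rintro x ⟨n, rfl⟩
  rcases Nat.eq_zero_or_pos n with hn | hn
  · subst hn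
    simp only [Nat.cast_zero, div_zero]
    have : (0:ℝ) ≤ Real.log 2 := Real.log_nonneg one_le_two
    linarith
  · have hn1 : (1:ℝ) ≤ (n:ℝ) := by exact_mod_cast hn
    have hnpos : (0:ℝ) < (n:ℝ) := by linarith
    have h1 : -Real.log 2 / (n:ℝ) ≤ aSeq v ω z n / n :=
      (div_le_div_iff_of_pos_right hnpos).mpr (neg_log_two_le_aSeq hvc n)
    have h2 : Real.log 2 / (n:ℝ) ≤ Real.log 2 :=
      div_le_self (Real.log_nonneg one_le_two) hn1
    rw [neg_div] at h1
    linarith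

lemma LyapFS_eq_aSeq_div (m : ℕ) : LyapFS v ω z m 0 = aSeq v ω z m / m := by
  unfold LyapFS
  have h1 : (∫ θ in (0:ℝ)..1, uFun v ω z m (((θ:ℝ):ℂ) + ((0:ℝ):ℂ) * Complex.I))
      = ∫ θ in (0:ℝ)..1, (1/(m:ℝ)) * gFun v ω z m θ := by
    congr 1
    funext θ
    simp [uFun, gFun]
  rw [h1, intervalIntegral.integral_const_mul]
  unfold aSeq
  ring

lemma Lyap_le_LyapFS (hper : ∀ w : ℂ, v (w + 1) = v w)
    (hvc : Continuous fun θ : ℝ => v ((θ : ℝ) : ℂ)) (m : ℕ) (hm : m ≠ 0) :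
    Lyap v ω z 0 ≤ LyapFS v ω z m 0 := by
  have hsub := aSeq_subadditive (v := v) (ω := ω) (z := z) hper hvc
  have hbdd := bddBelow_aSeq_div (v := v) (ω := ω) (z := z) hvc
  have hlim := hsub.tendsto_lim hbdd
  have h1 : Lyap v ω z 0 = hsub.lim := by
    unfold Lyap
    have : (fun k : ℕ => LyapFS v ω z k 0) = fun k : ℕ => aSeq v ω z k / k := by
      funext k; exact LyapFS_eq_aSeq_div k
    rw [this]
    exact hlim.limsup_eq
  rw [h1, LyapFS_eq_aSeq_div]
  exact hsub.lim_le_div hbdd hm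

/-! ### The key norm comparison for complexified energies -/

lemma norm_comparison (hreal : ∀ x : ℝ, (v ((x : ℝ) : ℂ)).im = 0) (E η : ℝ) (n : ℕ) (θ : ℝ) :
    opNorm2 (transfer v ω ((E : ℝ) : ℂ) (n+2) ((θ : ℝ) : ℂ))
      ≤ 4 * opNorm2 (transfer v ω (((E : ℝ) : ℂ) + ((η : ℝ) : ℂ) * Complex.I) (n+2)
          ((θ : ℝ) : ℂ)) := by
  set z := ((E : ℝ) : ℂ) + ((η : ℝ) : ℂ) * Complex.I with hzdef
  set b := opNorm2 (transfer v ω z (n+2) ((θ : ℝ) : ℂ)) with hb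
  have hz := transfer_eq_jacP v ω z n θ
  have hnv : ∀ (k : ℕ) (t : ℝ), ∀ w : ℂ, w.im ≠ 0 → (jacP v ω k t).eval w ≠ 0 :=
    fun k t w hw => jacP_ne_zero' hreal k t w hw
  have key : ∀ (k : ℕ) (t : ℝ),
      ‖(jacP v ω k t).eval ((E : ℝ) : ℂ)‖
        ≤ ‖(jacP v ω k t).eval z‖ :=
    fun k t => abs_eval_le _ (hnv k t) E η
  have hentry : ∀ i j, ‖transfer v ω z (n+2) ((θ : ℝ) : ℂ) i j‖ ≤ b :=
    fun i j => entry_le_opNorm2 _ i j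
  have e00 : ‖(jacP v ω (n+2) θ).eval z‖ ≤ b := by
    have h := hentry 0 0; rw [hz] at h; simpa using h
  have e01 : ‖(jacP v ω (n+1) (θ+ω)).eval z‖ ≤ b := by
    have h := hentry 0 1; rw [hz] at h
    simpa [AbsoluteValue.map_neg] using h
  have e10 : ‖(jacP v ω (n+1) θ).eval z‖ ≤ b := by
    have h := hentry 1 0; rw [hz] at h; simpa using h
  have e11 : ‖(jacP v ω n (θ+ω)).eval z‖ ≤ b := by
    have h := hentry 1 1; rw [hz] at h
    simpa [AbsoluteValue.map_neg] using h
  rw [transfer_eq_jacP v ω ((E : ℝ) : ℂ) n θ]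
  have hsum := opNorm2_le_sum
    !![(jacP v ω (n+2) θ).eval ((E : ℝ) : ℂ), -((jacP v ω (n+1) (θ+ω)).eval ((E : ℝ) : ℂ));
       (jacP v ω (n+1) θ).eval ((E : ℝ) : ℂ), -((jacP v ω n (θ+ω)).eval ((E : ℝ) : ℂ))]
  simp [AbsoluteValue.map_neg] at hsum
  have k1 := key (n+2) θ
  have k2 := key (n+1) (θ+ω)
  have k3 := key (n+1) θ
  have k4 := key n (θ+ω)
  linarith

end LDEaux

/-- corollary of the large deviation estimate, for complexified
energies `E + iη` with `|η| ≤ exp(-2m(κβ + 2Cδ))`. -/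
theorem large_deviation_estimate_complex_energy
    (ω : ℝ) (hω : ω ∈ Set.Ioo (0:ℝ) 1) (hirr : Irrational ω)
    (v : ℂ → ℂ) (hper : ∀ z : ℂ, v (z + 1) = v z)
    (hreal : ∀ x : ℝ, (v (x : ℂ)).im = 0)
    (hanal : ∃ ε₀ > 0, DifferentiableOn ℂ v {z : ℂ | |z.im| < ε₀})
    (hβ : betaE ω < ⊤) (E : ℝ)
    (C : ℝ) (hC : 1 < C)
    (hLDT : ∀ δ : ℝ, 0 < δ → δ < 1 / (betaR ω + 1) → ∃ m₀ : ℕ, ∀ m ≥ m₀,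
      volume {θ : ℝ | θ ∈ Set.Ico (0:ℝ) 1 ∧
          |uFun v ω (E : ℂ) m (θ : ℂ) - LyapFS v ω (E : ℂ) m 0|
            > 2 * accel v ω (E : ℂ) * betaR ω + C * δ}
        ≤ ENNReal.ofReal (Real.exp (-(δ ^ 4) * m))) :
    ∀ δ : ℝ, 0 < δ → δ < 1 / (betaR ω + 1) → ∃ m₀ : ℕ, ∀ m ≥ m₀, ∀ η : ℝ,
      |η| ≤ Real.exp (-(2 * m) * (accel v ω (E : ℂ) * betaR ω + 2 * C * δ)) →
      volume {θ : ℝ | θ ∈ Set.Ico (0:ℝ) 1 ∧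
          uFun v ω ((E : ℂ) + (η : ℂ) * Complex.I) m (θ : ℂ)
            < Lyap v ω (E : ℂ) 0 - 2 * accel v ω (E : ℂ) * betaR ω - 2 * C * δ}
        ≤ ENNReal.ofReal (Real.exp (-(δ ^ 4) * m)) := by
  classical
  obtain ⟨ε₀, hε₀, hdiff⟩ := hanal
  have hvc : Continuous fun θ : ℝ => v ((θ : ℝ) : ℂ) :=
    hdiff.continuousOn.comp_continuous Complex.continuous_ofReal
      (fun x => by simp [hε₀])
  intro δ hδ hδ'
  obtain ⟨m₁, hm₁⟩ := hLDT δ hδ hδ'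
  have hCpos : (0:ℝ) < C := lt_trans one_pos hC
  have hCδ : 0 < C * δ := mul_pos hCpos hδ
  refine ⟨max m₁ (max 2 (Nat.ceil (Real.log 4 / (C * δ)) + 1)), fun m hm η hη => ?_⟩
  have hmm₁ : m₁ ≤ m := le_trans (le_max_left _ _) hm
  have hm2 : 2 ≤ m := le_trans (le_trans (le_max_left _ _) (le_max_right _ _)) hm
  have hmceil : Nat.ceil (Real.log 4 / (C * δ)) + 1 ≤ m :=
    le_trans (le_trans (le_max_right _ _) (le_max_right _ _)) hm
  have hmpos : (0:ℝ) < (m:ℝ) := by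
    have : (0:ℕ) < m := by omega
    exact_mod_cast this
  have hlog4 : Real.log 4 ≤ C * δ * m := by
    have h1 : Real.log 4 / (C * δ) ≤ (m:ℝ) := by
      refine le_trans (Nat.le_ceil _) ?_
      exact_mod_cast Nat.le_of_succ_le hmceil
    calc Real.log 4 = Real.log 4 / (C * δ) * (C * δ) := by field_simp
    _ ≤ (m:ℝ) * (C * δ) := mul_le_mul_of_nonneg_right h1 hCδ.le
    _ = C * δ * m := by ring
  set z := ((E : ℝ) : ℂ) + ((η : ℝ) : ℂ) * Complex.I with hzdef
  obtain ⟨n, hn⟩ := Nat.exists_eq_add_of_le hm2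
  have hmn : m = n + 2 := by omega
  have hsubset : {θ : ℝ | θ ∈ Set.Ico (0:ℝ) 1 ∧
        uFun v ω ((E : ℂ) + (η : ℂ) * Complex.I) m (θ : ℂ)
          < Lyap v ω (E : ℂ) 0 - 2 * accel v ω (E : ℂ) * betaR ω - 2 * C * δ}
      ⊆ {θ : ℝ | θ ∈ Set.Ico (0:ℝ) 1 ∧
          |uFun v ω (E : ℂ) m (θ : ℂ) - LyapFS v ω (E : ℂ) m 0|
            > 2 * accel v ω (E : ℂ) * betaR ω + C * δ} := by
    rintro θ ⟨hθI, hθu⟩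
    refine ⟨hθI, ?_⟩
    set a := opNorm2 (transfer v ω ((E : ℝ) : ℂ) m ((θ : ℝ) : ℂ)) with hadef
    set b := opNorm2 (transfer v ω z m ((θ : ℝ) : ℂ)) with hbdef
    have hapos : (0:ℝ) < a := LDEaux.opNorm2_transfer_pos m _
    have hbpos : (0:ℝ) < b := LDEaux.opNorm2_transfer_pos m _
    have ha4b : a ≤ 4 * b := by
      rw [hadef, hbdef, hmn]
      exact LDEaux.norm_comparison hreal E η n θ
    have hloga : Real.log a ≤ Real.log 4 + Real.log b := by
      calc Real.log a ≤ Real.log (4 * b) := Real.log_le_log hapos ha4b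
      _ = Real.log 4 + Real.log b := Real.log_mul (by norm_num) (ne_of_gt hbpos)
    have huE : uFun v ω (E : ℂ) m (θ : ℂ) = (1/(m:ℝ)) * Real.log a := rfl
    have huz : uFun v ω ((E : ℂ) + (η : ℂ) * Complex.I) m (θ : ℂ)
        = (1/(m:ℝ)) * Real.log b := rfl
    have hfrac : (1/(m:ℝ)) * Real.log 4 ≤ C * δ := by
      rw [div_mul_eq_mul_div, one_mul, div_le_iff₀ hmpos]
      linarith
    have hchain : uFun v ω (E : ℂ) m (θ : ℂ)
        ≤ C * δ + uFun v ω ((E : ℂ) + (η : ℂ) * Complex.I) m (θ : ℂ) := by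
      rw [huE, huz]
      have h1 : (1/(m:ℝ)) * Real.log a ≤ (1/(m:ℝ)) * (Real.log 4 + Real.log b) := by
        apply mul_le_mul_of_nonneg_left hloga
        positivity
      calc (1/(m:ℝ)) * Real.log a ≤ (1/(m:ℝ)) * Real.log 4 + (1/(m:ℝ)) * Real.log b := by
            rw [← mul_add]; exact h1
      _ ≤ C * δ + (1/(m:ℝ)) * Real.log b := by linarith
    have hLm : Lyap v ω (E : ℂ) 0 ≤ LyapFS v ω (E : ℂ) m 0 :=
      LDEaux.Lyap_le_LyapFS hper hvc m (by omega)
    have hfinal : uFun v ω (E : ℂ) m (θ : ℂ) - LyapFS v ω (E : ℂ) m 0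
        < -(2 * accel v ω (E : ℂ) * betaR ω + C * δ) := by linarith
    calc 2 * accel v ω (E : ℂ) * betaR ω + C * δ
        < -(uFun v ω (E : ℂ) m (θ : ℂ) - LyapFS v ω (E : ℂ) m 0) := by linarith
    _ ≤ |uFun v ω (E : ℂ) m (θ : ℂ) - LyapFS v ω (E : ℂ) m 0| := neg_le_abs _
  exact le_trans (measure_mono hsubset) (hm₁ m hmm₁)

end
end

section
/- Let R > 1, let μ be a finite positive Borel measure on the annulus 𝒜_R that is invariant under the map z ↦ 1/z̄, and let h be continuous on the closed annulus and harmonic on 𝒜_R. Assume the function u(z) := ∫_{𝒜_R} 2π·G_R(z,w) μ(dw) + h(z) satisfies u(z) = u(1/z̄) for all z ∈ 𝒜_R. Then there exists b ∈ ℝ such that ∫_𝕋 h(e^{2πi(θ+iε)}) dθ = b for every ε with |ε| < (log R)/(2π). -/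
open MeasureTheory Filter Topology

noncomputable section

lemma conj_real_zpow (R : ℝ) (n : ℤ) : (starRingEnd ℂ) ((R:ℂ) ^ n) = (R:ℂ) ^ n := by
  rw [map_zpow₀, Complex.conj_ofReal]

lemma abs_eq_abs_of_conj {x y : ℂ} (hxy : (starRingEnd ℂ) x = y) :
    ‖x‖ = ‖y‖ := by rw [← hxy, Complex.norm_conj]

lemma mem_annulus_ne_zero {R : ℝ} (hR : 1 < R) {z : ℂ} (hz : z ∈ annulus R) : z ≠ 0 := by
  rintro rfl
  have h1 := hz.1
  simp only [norm_zero] at h1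
  have : (0:ℝ) < 1 / R := by positivity
  linarith

lemma green_inv (R : ℝ) (hR : 1 < R) {z w : ℂ} (hz : z ∈ annulus R) (hw : w ∈ annulus R)
    (hzw : z ≠ w) :
    greenR R ((starRingEnd ℂ) z)⁻¹ ((starRingEnd ℂ) w)⁻¹ = greenR R z w := by
  have hR0 : (0:ℝ) < R := lt_trans one_pos hR
  have hz0 : z ≠ 0 := mem_annulus_ne_zero hR hz
  have hw0 : w ≠ 0 := mem_annulus_ne_zero hR hw
  have hcz : (starRingEnd ℂ) z ≠ 0 := by simpa using hz0
  have hcw : (starRingEnd ℂ) w ≠ 0 := by simpa using hw0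
  have habsz : ‖z‖ ≠ 0 := by simpa using hz0
  have habsw : ‖w‖ ≠ 0 := by simpa using hw0
  have habszw : ‖z - w‖ ≠ 0 := by
    simp only [ne_eq, norm_eq_zero, sub_eq_zero]; exact hzw
  have hπ : Real.pi ≠ 0 := Real.pi_ne_zero
  have hLR : Real.log R ≠ 0 := ne_of_gt (Real.log_pos hR)
  have hRne : R ≠ 0 := ne_of_gt hR0
  -- modulus of difference of inverted points
  have hdiff : ‖((starRingEnd ℂ) z)⁻¹ - ((starRingEnd ℂ) w)⁻¹‖
      = ‖z - w‖ / (‖z‖ * ‖w‖) := by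
    have e : ((starRingEnd ℂ) z)⁻¹ - ((starRingEnd ℂ) w)⁻¹
        = (starRingEnd ℂ) (w - z) / ((starRingEnd ℂ) z * (starRingEnd ℂ) w) := by
      field_simp [map_sub]
      rw [map_sub]
    rw [e, norm_div, norm_mul, Complex.norm_conj, Complex.norm_conj, Complex.norm_conj,
      norm_sub_rev]
  -- modulus of inverted points
  have habs_inv : ∀ x : ℂ, ‖((starRingEnd ℂ) x)⁻¹‖ = (‖x‖)⁻¹ := by
    intro x; rw [norm_inv, Complex.norm_conj]
  -- numerator tprod equality
  have hnum : (∏' k : ℕ, (‖1 - (R : ℂ) ^ (-(4 * ((k : ℤ) + 1))) * ((starRingEnd ℂ) z)⁻¹ / ((starRingEnd ℂ) w)⁻¹‖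
          * ‖1 - (R : ℂ) ^ (-(4 * ((k : ℤ) + 1))) * ((starRingEnd ℂ) w)⁻¹ / ((starRingEnd ℂ) z)⁻¹‖))
      = (∏' k : ℕ, (‖1 - (R : ℂ) ^ (-(4 * ((k : ℤ) + 1))) * z / w‖
          * ‖1 - (R : ℂ) ^ (-(4 * ((k : ℤ) + 1))) * w / z‖)) := by
    refine tprod_congr fun k => ?_
    set c : ℂ := (R : ℂ) ^ (-(4 * ((k : ℤ) + 1))) with hcdef
    have hc : (starRingEnd ℂ) c = c := conj_real_zpow R _
    have e1 : ‖1 - c * ((starRingEnd ℂ) z)⁻¹ / ((starRingEnd ℂ) w)⁻¹‖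
        = ‖1 - c * w / z‖ := by
      refine abs_eq_abs_of_conj ?_
      rw [map_sub, map_one, map_div₀, map_mul, hc, map_inv₀, map_inv₀,
        Complex.conj_conj, Complex.conj_conj]
      field_simp
    have e2 : ‖1 - c * ((starRingEnd ℂ) w)⁻¹ / ((starRingEnd ℂ) z)⁻¹‖
        = ‖1 - c * z / w‖ := by
      refine abs_eq_abs_of_conj ?_
      rw [map_sub, map_one, map_div₀, map_mul, hc, map_inv₀, map_inv₀,
        Complex.conj_conj, Complex.conj_conj]
      field_simp
    rw [e1, e2]; ring
  -- denominator tprod equality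
  have hden : (∏' k : ℕ, (‖1 - (R : ℂ) ^ (-(4 * ((k : ℤ) + 1) - 2)) * ((starRingEnd ℂ) w)⁻¹ * (starRingEnd ℂ) (((starRingEnd ℂ) z)⁻¹)‖
          * ‖1 - (R : ℂ) ^ (-(4 * ((k : ℤ) + 1) - 2)) / ((starRingEnd ℂ) (((starRingEnd ℂ) z)⁻¹) * ((starRingEnd ℂ) w)⁻¹)‖))
      = (∏' k : ℕ, (‖1 - (R : ℂ) ^ (-(4 * ((k : ℤ) + 1) - 2)) * w * (starRingEnd ℂ) z‖
          * ‖1 - (R : ℂ) ^ (-(4 * ((k : ℤ) + 1) - 2)) / ((starRingEnd ℂ) z * w)‖)) := by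
    refine tprod_congr fun k => ?_
    set c : ℂ := (R : ℂ) ^ (-(4 * ((k : ℤ) + 1) - 2)) with hcdef
    have hc : (starRingEnd ℂ) c = c := conj_real_zpow R _
    rw [map_inv₀, Complex.conj_conj]
    have e1 : ‖1 - c * ((starRingEnd ℂ) w)⁻¹ * z⁻¹‖
        = ‖1 - c / ((starRingEnd ℂ) z * w)‖ := by
      refine abs_eq_abs_of_conj ?_
      rw [map_sub, map_one, map_mul, map_mul, hc, map_inv₀, map_inv₀, Complex.conj_conj]
      field_simp
    have e2 : ‖1 - c / (z⁻¹ * ((starRingEnd ℂ) w)⁻¹)‖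
        = ‖1 - c * w * (starRingEnd ℂ) z‖ := by
      refine abs_eq_abs_of_conj ?_
      rw [map_sub, map_one, map_div₀, map_mul, hc, map_inv₀, map_inv₀, Complex.conj_conj]
      field_simp
    rw [e1, e2]; ring
  -- assemble
  unfold greenR GammaR
  rw [hnum, hden, hdiff, habs_inv, habs_inv]
  rw [Real.log_div habszw (mul_ne_zero habsz habsw), Real.log_mul habsz habsw,
    Real.log_div (inv_ne_zero habsz) hRne, Real.log_div (inv_ne_zero habsw) hRne,
    Real.log_inv, Real.log_inv,
    Real.log_div habsz hRne, Real.log_div habsw hRne]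
  rw [← add_assoc, ← add_assoc]
  congr 1
  field_simp
  ring

lemma isOpen_annulus (R : ℝ) : IsOpen (annulus R) := by
  have : annulus R = (fun z : ℂ => ‖z‖) ⁻¹' (Set.Ioo (1/R) R) := by
    ext z; simp [annulus, Set.mem_Ioo]
  rw [this]
  exact isOpen_Ioo.preimage continuous_norm

/-- the inversion as a measurable equivalence -/
def invConj : ℂ ≃ᵐ ℂ where
  toFun z := ((starRingEnd ℂ) z)⁻¹
  invFun z := ((starRingEnd ℂ) z)⁻¹
  left_inv z := by simp
  right_inv z := by simp
  measurable_toFun := measurable_inv.comp Complex.continuous_conj.measurable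
  measurable_invFun := measurable_inv.comp Complex.continuous_conj.measurable

lemma mem_annulus_inv {R : ℝ} (hR : 1 < R) {z : ℂ} (hz : z ∈ annulus R) :
    ((starRingEnd ℂ) z)⁻¹ ∈ annulus R := by
  have hR0 : (0:ℝ) < R := lt_trans one_pos hR
  have hz0 : (0:ℝ) < ‖z‖ := lt_trans (by positivity) hz.1
  have habs : ‖((starRingEnd ℂ) z)⁻¹‖ = (‖z‖)⁻¹ := by
    rw [norm_inv, Complex.norm_conj]
  constructor
  · rw [habs, one_div]
    exact inv_strictAnti₀ hz0 hz.2
  · rw [habs]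
    have := inv_strictAnti₀ (by positivity : (0:ℝ) < 1/R) hz.1
    rwa [one_div, inv_inv] at this

section PartB
variable {R : ℝ} {μ : Measure ℂ}

lemma ae_mem_annulus (hsupp : μ (annulus R)ᶜ = 0) : ∀ᵐ w ∂μ, w ∈ annulus R := by
  rw [ae_iff]
  simpa [Set.compl_def] using hsupp

lemma potential_inv (hR : 1 < R) (hsupp : μ (annulus R)ᶜ = 0)
    (hinv : Measure.map (fun z : ℂ => ((starRingEnd ℂ) z)⁻¹) μ = μ)
    {z : ℂ} (hz : z ∈ annulus R) (hatom : μ {z} = 0) :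
    (∫ w, 2 * Real.pi * greenR R ((starRingEnd ℂ) z)⁻¹ w ∂μ)
      = ∫ w, 2 * Real.pi * greenR R z w ∂μ := by
  have hmap : Measure.map invConj μ = μ := hinv
  calc (∫ w, 2 * Real.pi * greenR R ((starRingEnd ℂ) z)⁻¹ w ∂μ)
      = ∫ w, 2 * Real.pi * greenR R ((starRingEnd ℂ) z)⁻¹ w ∂(Measure.map invConj μ) := by
        rw [hmap]
    _ = ∫ w, 2 * Real.pi * greenR R ((starRingEnd ℂ) z)⁻¹ (invConj w) ∂μ :=
        integral_map_equiv invConj _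
    _ = ∫ w, 2 * Real.pi * greenR R z w ∂μ := by
        refine integral_congr_ae ?_
        have h1 : ∀ᵐ w ∂μ, w ∈ annulus R := ae_mem_annulus hsupp
        have h2 : ∀ᵐ w ∂μ, w ≠ z := by
          rw [ae_iff]
          simpa using hatom
        filter_upwards [h1, h2] with w hw hwz
        have : greenR R ((starRingEnd ℂ) z)⁻¹ ((starRingEnd ℂ) w)⁻¹ = greenR R z w :=
          green_inv R hR hz hw (fun hzw => hwz (hzw.symm))
        simpa [invConj, MeasurableEquiv.coe_mk, Equiv.coe_fn_mk] using congrArg (2 * Real.pi * ·) this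

lemma countable_atoms (hfin : IsFiniteMeasure μ) : Set.Countable {z : ℂ | μ {z} ≠ 0} := by
  have := Measure.countable_meas_pos_of_disjoint_iUnion (μ := μ)
    (As := fun z : ℂ => {z}) (fun z => measurableSet_singleton z)
    (fun i j hij => by simp [Function.onFun, Set.disjoint_singleton, hij])
  simp only [ne_eq, ← pos_iff_ne_zero]
  exact this

lemma h_symm_all (hR : 1 < R) (hfin : IsFiniteMeasure μ)
    (hsupp : μ (annulus R)ᶜ = 0)
    (hinv : Measure.map (fun z : ℂ => ((starRingEnd ℂ) z)⁻¹) μ = μ)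
    {h : ℂ → ℝ} (hcd : ContDiffOn ℝ 2 h (annulus R))
    (hsym : ∀ z ∈ annulus R,
      (∫ w, 2 * Real.pi * greenR R z w ∂μ) + h z
        = (∫ w, 2 * Real.pi * greenR R ((starRingEnd ℂ) z)⁻¹ w ∂μ)
          + h ((starRingEnd ℂ) z)⁻¹) :
    ∀ z ∈ annulus R, h z = h ((starRingEnd ℂ) z)⁻¹ := by
  intro z hz
  -- symmetry off the atoms
  have key : ∀ x ∈ annulus R, μ {x} = 0 → h x = h ((starRingEnd ℂ) x)⁻¹ := by
    intro x hx hax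
    have := hsym x hx
    rw [potential_inv hR hsupp hinv hx hax] at this
    linarith
  -- continuity of both sides at z
  have hopen := isOpen_annulus R
  have hhc : ContinuousAt h z :=
    (hcd.continuousOn.continuousAt (hopen.mem_nhds hz))
  have hz0 : z ≠ 0 := mem_annulus_ne_zero hR hz
  have hTz : ((starRingEnd ℂ) z)⁻¹ ∈ annulus R := mem_annulus_inv hR hz
  have hTcont : ContinuousAt (fun x : ℂ => ((starRingEnd ℂ) x)⁻¹) z := by
    have : ContinuousAt (starRingEnd ℂ) z := Complex.continuous_conj.continuousAt
    exact this.inv₀ (by simpa using hz0)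
  have hhc2 : ContinuousAt (fun x : ℂ => h (((starRingEnd ℂ) x)⁻¹)) z :=
    ContinuousAt.comp (g := h) (hcd.continuousOn.continuousAt (hopen.mem_nhds hTz)) hTcont
  -- dense set of good points
  set C : Set ℂ := {x : ℂ | μ {x} ≠ 0} ∪ {z} with hC
  have hCc : Set.Countable C := (countable_atoms hfin).union (Set.countable_singleton z)
  have hdense : Dense Cᶜ := hCc.dense_compl ℝ
  have hne : (𝓝[Cᶜ] z).NeBot := mem_closure_iff_nhdsWithin_neBot.mp (by
    rw [hdense.closure_eq]; trivial)
  -- F tends to F z and to 0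
  have h1 : Tendsto (fun x => h x - h (((starRingEnd ℂ) x)⁻¹)) (𝓝[Cᶜ] z)
      (𝓝 (h z - h (((starRingEnd ℂ) z)⁻¹))) :=
    ((hhc.sub hhc2).tendsto).mono_left nhdsWithin_le_nhds
  have h2 : Tendsto (fun x => h x - h (((starRingEnd ℂ) x)⁻¹)) (𝓝[Cᶜ] z) (𝓝 0) := by
    have hev : ∀ᶠ x in 𝓝[Cᶜ] z, h x - h (((starRingEnd ℂ) x)⁻¹) = 0 := by
      have hann : ∀ᶠ x in 𝓝[Cᶜ] z, x ∈ annulus R :=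
        mem_nhdsWithin_of_mem_nhds (hopen.mem_nhds hz)
      have hmem : ∀ᶠ x in 𝓝[Cᶜ] z, x ∈ Cᶜ := eventually_mem_nhdsWithin
      filter_upwards [hann, hmem] with x hx hxC
      have : μ {x} = 0 := by
        by_contra hne'
        exact hxC (Or.inl hne')
      rw [key x hx this, sub_self]
    exact Tendsto.congr' (hev.mono fun x hx => hx.symm) tendsto_const_nhds
  have := tendsto_nhds_unique h1 h2
  linarith
end PartB

section PartD

/-- complex exponential coordinate -/
def Phi (ζ : ℂ) : ℂ := Complex.exp (2 * (Real.pi : ℂ) * Complex.I * ζ)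

def strip (R : ℝ) : Set ℂ := {ζ : ℂ | |ζ.im| < Real.log R / (2 * Real.pi)}

lemma isOpen_strip (R : ℝ) : IsOpen (strip R) := by
  have : strip R = (fun ζ : ℂ => |ζ.im|) ⁻¹' (Set.Iio (Real.log R / (2 * Real.pi))) := rfl
  rw [this]
  exact isOpen_Iio.preimage (_root_.continuous_abs.comp Complex.continuous_im)

lemma continuous_Phi : Continuous Phi :=
  Complex.continuous_exp.comp (continuous_const.mul continuous_id)

lemma Phi_mem {R : ℝ} (hR : 1 < R) {ζ : ℂ} (hζ : ζ ∈ strip R) : Phi ζ ∈ annulus R := by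
  have hR0 : (0:ℝ) < R := lt_trans one_pos hR
  have hre : (2 * (Real.pi : ℂ) * Complex.I * ζ).re = -(2 * Real.pi * ζ.im) := by
    simp [Complex.mul_re, Complex.mul_im]
  have habs : ‖Phi ζ‖ = Real.exp (-(2 * Real.pi * ζ.im)) := by
    rw [Phi, Complex.norm_exp, hre]
  have hb : |2 * Real.pi * ζ.im| < Real.log R := by
    have h2π : (0:ℝ) < 2 * Real.pi := by positivity
    have := hζ
    rw [strip, Set.mem_setOf_eq, lt_div_iff₀ h2π] at this
    calc |2 * Real.pi * ζ.im| = |ζ.im| * (2 * Real.pi) := by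
          rw [abs_mul, abs_of_pos h2π]; ring
      _ < Real.log R := this
  rw [abs_lt] at hb
  constructor
  · rw [habs, one_div, ← Real.exp_log (show (0:ℝ) < R from hR0), ← Real.exp_neg]
    exact Real.exp_lt_exp.mpr (by linarith)
  · rw [habs, ← Real.exp_log (show (0:ℝ) < R from hR0)]
    exact Real.exp_lt_exp.mpr (by linarith)

lemma Phi_period (ζ : ℂ) : Phi (ζ + 1) = Phi ζ := by
  rw [Phi, Phi, mul_add, Complex.exp_add, mul_one, Complex.exp_two_pi_mul_I, mul_one]

lemma Phi_hasDeriv (ζ v : ℂ) (t₀ : ℝ) :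
    HasDerivAt (fun t : ℝ => Phi (ζ + t • v))
      (2 * (Real.pi : ℂ) * Complex.I * v * Phi (ζ + t₀ • v)) t₀ := by
  have h1 : HasDerivAt (fun t : ℝ => ζ + t • v) v t₀ := by
    simpa using ((hasDerivAt_id t₀).smul_const v).const_add ζ
  have h2 : HasDerivAt (fun t : ℝ => 2 * (Real.pi : ℂ) * Complex.I * (ζ + t • v))
      (2 * (Real.pi : ℂ) * Complex.I * v) t₀ := h1.const_mul _
  have h3 := h2.cexp
  convert h3 using 1
  · rfl
  rw [Phi]; ring

end PartD

section PartD2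
variable {R : ℝ} {h : ℂ → ℝ}

/-- direction of the curve `t ↦ Phi (ζ + t v)` -/
def cdir (v ζ : ℂ) : ℂ := 2 * (Real.pi : ℂ) * Complex.I * v * Phi ζ

/-- first derivative of `h ∘ Phi` along direction `v` -/
def dd (h : ℂ → ℝ) (v ζ : ℂ) : ℝ := fderiv ℝ h (Phi ζ) (cdir v ζ)

/-- second derivative of `h ∘ Phi` along direction `v` -/
def dd2 (h : ℂ → ℝ) (v ζ : ℂ) : ℝ :=
  fderiv ℝ (fderiv ℝ h) (Phi ζ) (cdir v ζ) (cdir v ζ)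
    + fderiv ℝ h (Phi ζ) (2 * (Real.pi : ℂ) * Complex.I * v * cdir v ζ)

lemma hasFDerivAt_of_mem (hR : 1 < R) (hcd : ContDiffOn ℝ 2 h (annulus R)) {x : ℂ}
    (hx : x ∈ annulus R) : HasFDerivAt h (fderiv ℝ h x) x :=
  ((hcd.differentiableOn (by norm_num)).differentiableAt
    ((isOpen_annulus R).mem_nhds hx)).hasFDerivAt

lemma hasFDerivAt_fderiv_of_mem (hR : 1 < R) (hcd : ContDiffOn ℝ 2 h (annulus R)) {x : ℂ}
    (hx : x ∈ annulus R) : HasFDerivAt (fderiv ℝ h) (fderiv ℝ (fderiv ℝ h) x) x := by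
  have h1 : ContDiffOn ℝ 1 (fderiv ℝ h) (annulus R) :=
    hcd.fderiv_of_isOpen (isOpen_annulus R) (by norm_num)
  exact ((h1.differentiableOn (by norm_num)).differentiableAt
    ((isOpen_annulus R).mem_nhds hx)).hasFDerivAt

lemma hasDerivAt_hPhi (hR : 1 < R) (hcd : ContDiffOn ℝ 2 h (annulus R)) (v ζ : ℂ) (t₀ : ℝ)
    (hmem : ζ + t₀ • v ∈ strip R) :
    HasDerivAt (fun t : ℝ => h (Phi (ζ + t • v))) (dd h v (ζ + t₀ • v)) t₀ :=
  (hasFDerivAt_of_mem hR hcd (Phi_mem hR hmem)).comp_hasDerivAt t₀ (Phi_hasDeriv ζ v t₀)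

lemma hasDerivAt_dd (hR : 1 < R) (hcd : ContDiffOn ℝ 2 h (annulus R)) (v ζ : ℂ) (t₀ : ℝ)
    (hmem : ζ + t₀ • v ∈ strip R) :
    HasDerivAt (fun t : ℝ => dd h v (ζ + t • v)) (dd2 h v (ζ + t₀ • v)) t₀ := by
  have hB : HasDerivAt (fun t : ℝ => fderiv ℝ h (Phi (ζ + t • v)))
      ((fderiv ℝ (fderiv ℝ h) (Phi (ζ + t₀ • v))) (cdir v (ζ + t₀ • v))) t₀ :=
    (hasFDerivAt_fderiv_of_mem hR hcd (Phi_mem hR hmem)).comp_hasDerivAt t₀ (Phi_hasDeriv ζ v t₀)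
  have hc : HasDerivAt (fun t : ℝ => cdir v (ζ + t • v))
      (2 * (Real.pi : ℂ) * Complex.I * v * cdir v (ζ + t₀ • v)) t₀ := by
    simp only [cdir]
    exact (Phi_hasDeriv ζ v t₀).const_mul _
  exact hB.clm_apply hc

lemma secondDirDeriv_eq (hR : 1 < R) (hcd : ContDiffOn ℝ 2 h (annulus R)) {x : ℂ}
    (hx : x ∈ annulus R) (v : ℂ) :
    secondDirDeriv h v x = fderiv ℝ (fderiv ℝ h) x v v := by
  have hopen := isOpen_annulus R
  have hline : Continuous (fun t : ℝ => x + t • v) := by continuity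
  have hev : ∀ᶠ t in nhds (0:ℝ), x + t • v ∈ annulus R :=
    hline.continuousAt.preimage_mem_nhds (by simpa using hopen.mem_nhds hx)
  have hworld : ∀ t : ℝ, x + t • v ∈ annulus R →
      HasDerivAt (fun s : ℝ => h (x + s • v)) (fderiv ℝ h (x + t • v) v) t := by
    intro t ht
    have hψ : HasDerivAt (fun s : ℝ => x + s • v) v t := by
      simpa using ((hasDerivAt_id t).smul_const v).const_add x
    exact (hasFDerivAt_of_mem hR hcd ht).comp_hasDerivAt t hψ
  have hd1 : (fun t : ℝ => deriv (fun s : ℝ => h (x + s • v)) t)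
      =ᶠ[nhds (0:ℝ)] fun t => fderiv ℝ h (x + t • v) v :=
    hev.mono fun t ht => (hworld t ht).deriv
  rw [secondDirDeriv, hd1.deriv_eq]
  have hB : HasDerivAt (fun t : ℝ => fderiv ℝ h (x + t • v))
      ((fderiv ℝ (fderiv ℝ h) x) v) 0 := by
    have hψ : HasDerivAt (fun s : ℝ => x + s • v) v 0 := by
      simpa using ((hasDerivAt_id (0:ℝ)).smul_const v).const_add x
    have hx' : HasFDerivAt (fderiv ℝ h) (fderiv ℝ (fderiv ℝ h) x) (x + (0:ℝ) • v) := by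
      simpa using hasFDerivAt_fderiv_of_mem hR hcd hx
    exact hx'.comp_hasDerivAt 0 hψ
  have := hB.clm_apply (hasDerivAt_const (0:ℝ) v)
  have h2 := this.deriv
  simpa using h2

lemma dd2_sum (hR : 1 < R) (hcd : ContDiffOn ℝ 2 h (annulus R))
    (hlap : ∀ z ∈ annulus R, secondDirDeriv h 1 z + secondDirDeriv h Complex.I z = 0)
    {ζ : ℂ} (hζ : ζ ∈ strip R) :
    dd2 h 1 ζ + dd2 h Complex.I ζ = 0 := by
  have hx : Phi ζ ∈ annulus R := Phi_mem hR hζ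
  set x := Phi ζ
  set B := fderiv ℝ (fderiv ℝ h) x with hBdef
  set L := fderiv ℝ h x with hLdef
  have hB0 : B 1 1 + B Complex.I Complex.I = 0 := by
    have := hlap x hx
    rwa [secondDirDeriv_eq hR hcd hx 1, secondDirDeriv_eq hR hcd hx Complex.I] at this
  -- the quadratic parts
  set a : ℂ := cdir 1 ζ with hadef
  have hlin : L (2 * (Real.pi : ℂ) * Complex.I * 1 * a)
      + L (2 * (Real.pi : ℂ) * Complex.I * Complex.I * (Complex.I * a)) = 0 := by
    have he : 2 * (Real.pi : ℂ) * Complex.I * Complex.I * (Complex.I * a)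
        = -(2 * (Real.pi : ℂ) * Complex.I * 1 * a) := by
      linear_combination (2 * (Real.pi:ℂ) * a * Complex.I) * Complex.I_sq
    rw [he, map_neg]; ring
  have hIa : cdir Complex.I ζ = Complex.I * a := by simp only [cdir, hadef]; ring
  have expand : ∀ (p q : ℝ), B (p • (1:ℂ) + q • Complex.I) (p • (1:ℂ) + q • Complex.I)
      = p*p*(B 1 1) + p*q*(B 1 Complex.I) + q*p*(B Complex.I 1) + q*q*(B Complex.I Complex.I) := by
    intro p q
    simp only [map_add, _root_.map_smul, ContinuousLinearMap.add_apply, ContinuousLinearMap.coe_smul',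
      Pi.smul_apply, smul_eq_mul]
    ring
  have ha : a = a.re • (1:ℂ) + a.im • Complex.I := by
    simp [Complex.real_smul, Complex.re_add_im]
  have hIa2 : Complex.I * a = (-a.im) • (1:ℂ) + a.re • Complex.I := by
    simp only [Complex.real_smul, smul_eq_mul, mul_one]
    apply Complex.ext <;> simp
  have e1 : B a a = a.re*a.re*(B 1 1) + a.re*a.im*(B 1 Complex.I)
      + a.im*a.re*(B Complex.I 1) + a.im*a.im*(B Complex.I Complex.I) := by
    conv_lhs => rw [ha]
    exact expand _ _
  have e2 : B (Complex.I * a) (Complex.I * a) = (-a.im)*(-a.im)*(B 1 1)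
      + (-a.im)*a.re*(B 1 Complex.I) + a.re*(-a.im)*(B Complex.I 1)
      + a.re*a.re*(B Complex.I Complex.I) := by
    conv_lhs => rw [hIa2]
    exact expand _ _
  simp only [dd2, ← hBdef, ← hLdef, ← hadef, hIa]
  have : B a a + B (Complex.I * a) (Complex.I * a) = 0 := by
    rw [e1, e2]; linear_combination (a.re^2 + a.im^2) * hB0
  linarith [hlin, this]

end PartD2

section PartD3
variable {R : ℝ} {h : ℂ → ℝ}

lemma continuousOn_dd (hR : 1 < R) (hcd : ContDiffOn ℝ 2 h (annulus R)) (v : ℂ) :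
    ContinuousOn (dd h v) (strip R) := by
  have hmaps : Set.MapsTo Phi (strip R) (annulus R) := fun ζ hζ => Phi_mem hR hζ
  have hf' : ContinuousOn (fderiv ℝ h) (annulus R) :=
    hcd.continuousOn_fderiv_of_isOpen (isOpen_annulus R) (by norm_num)
  have h1 : ContinuousOn (fun ζ => fderiv ℝ h (Phi ζ)) (strip R) :=
    hf'.comp continuous_Phi.continuousOn hmaps
  have h2 : ContinuousOn (fun ζ => cdir v ζ) (strip R) := by
    simp only [cdir]
    exact (continuous_const.mul continuous_Phi).continuousOn
  exact h1.clm_apply h2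

lemma continuousOn_dd2 (hR : 1 < R) (hcd : ContDiffOn ℝ 2 h (annulus R)) (v : ℂ) :
    ContinuousOn (dd2 h v) (strip R) := by
  have hmaps : Set.MapsTo Phi (strip R) (annulus R) := fun ζ hζ => Phi_mem hR hζ
  have hf'cd : ContDiffOn ℝ 1 (fderiv ℝ h) (annulus R) :=
    hcd.fderiv_of_isOpen (isOpen_annulus R) (by norm_num)
  have hf'' : ContinuousOn (fderiv ℝ (fderiv ℝ h)) (annulus R) :=
    hf'cd.continuousOn_fderiv_of_isOpen (isOpen_annulus R) (by norm_num)
  have hf' : ContinuousOn (fderiv ℝ h) (annulus R) :=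
    hcd.continuousOn_fderiv_of_isOpen (isOpen_annulus R) (by norm_num)
  have hc : ContinuousOn (fun ζ => cdir v ζ) (strip R) := by
    simp only [cdir]
    exact (continuous_const.mul continuous_Phi).continuousOn
  have hc2 : ContinuousOn (fun ζ => 2 * (Real.pi : ℂ) * Complex.I * v * cdir v ζ) (strip R) :=
    continuous_const.continuousOn.mul hc
  have h1 : ContinuousOn (fun ζ => fderiv ℝ (fderiv ℝ h) (Phi ζ)) (strip R) :=
    hf''.comp continuous_Phi.continuousOn hmaps
  have h2 : ContinuousOn (fun ζ => fderiv ℝ h (Phi ζ)) (strip R) :=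
    hf'.comp continuous_Phi.continuousOn hmaps
  exact ((h1.clm_apply hc).clm_apply hc).add (h2.clm_apply hc2)

-- membership of horizontal lines in the strip
lemma line_mem_strip {R : ℝ} (hR : 1 < R) {ε : ℝ}
    (hε : |ε| < Real.log R / (2 * Real.pi)) (θ : ℝ) :
    (θ : ℂ) + (ε : ℂ) * Complex.I ∈ strip R := by
  simp only [strip, Set.mem_setOf_eq, Complex.add_im, Complex.ofReal_im, Complex.mul_im,
    Complex.ofReal_re, Complex.I_im, Complex.I_re, mul_zero, mul_one, Complex.ofReal_im]
  simpa using hε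

lemma continuous_line (ε : ℝ) : Continuous (fun θ : ℝ => (θ : ℂ) + (ε : ℂ) * Complex.I) :=
  Complex.continuous_ofReal.add continuous_const

-- derivative in ε of h ∘ Phi
lemma W1 (hR : 1 < R) (hcd : ContDiffOn ℝ 2 h (annulus R)) (θ : ℝ) {ε₀ : ℝ}
    (hε : |ε₀| < Real.log R / (2 * Real.pi)) :
    HasDerivAt (fun ε : ℝ => h (Phi ((θ : ℂ) + (ε : ℂ) * Complex.I)))
      (dd h Complex.I ((θ : ℂ) + (ε₀ : ℂ) * Complex.I)) ε₀ := by
  have hmem : (θ : ℂ) + ε₀ • Complex.I ∈ strip R := by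
    simpa [Complex.real_smul] using line_mem_strip hR hε θ
  have := hasDerivAt_hPhi hR hcd Complex.I (θ : ℂ) ε₀ hmem
  simpa [Complex.real_smul] using this

-- derivative in ε of dd h I
lemma W2 (hR : 1 < R) (hcd : ContDiffOn ℝ 2 h (annulus R)) (θ : ℝ) {ε₀ : ℝ}
    (hε : |ε₀| < Real.log R / (2 * Real.pi)) :
    HasDerivAt (fun ε : ℝ => dd h Complex.I ((θ : ℂ) + (ε : ℂ) * Complex.I))
      (dd2 h Complex.I ((θ : ℂ) + (ε₀ : ℂ) * Complex.I)) ε₀ := by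
  have hmem : (θ : ℂ) + ε₀ • Complex.I ∈ strip R := by
    simpa [Complex.real_smul] using line_mem_strip hR hε θ
  have := hasDerivAt_dd hR hcd Complex.I (θ : ℂ) ε₀ hmem
  simpa [Complex.real_smul] using this

-- derivative in θ of dd h 1
lemma W3 (hR : 1 < R) (hcd : ContDiffOn ℝ 2 h (annulus R)) {ε : ℝ}
    (hε : |ε| < Real.log R / (2 * Real.pi)) (θ₀ : ℝ) :
    HasDerivAt (fun θ : ℝ => dd h 1 ((θ : ℂ) + (ε : ℂ) * Complex.I))
      (dd2 h 1 ((θ₀ : ℂ) + (ε : ℂ) * Complex.I)) θ₀ := by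
  have hmem : (ε : ℂ) * Complex.I + θ₀ • (1 : ℂ) ∈ strip R := by
    have := line_mem_strip hR hε θ₀
    simpa [Complex.real_smul, add_comm] using this
  have := hasDerivAt_dd hR hcd 1 ((ε : ℂ) * Complex.I) θ₀ hmem
  have heq : (fun θ : ℝ => dd h 1 ((ε : ℂ) * Complex.I + θ • (1:ℂ)))
      = fun θ : ℝ => dd h 1 ((θ : ℂ) + (ε : ℂ) * Complex.I) := by
    funext θ
    congr 1
    simp [Complex.real_smul]
    ring
  rw [heq] at this
  convert this using 2
  simp [Complex.real_smul]
  ring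

-- the flux integral vanishes
lemma flux_zero (hR : 1 < R) (hcd : ContDiffOn ℝ 2 h (annulus R)) {ε : ℝ}
    (hε : |ε| < Real.log R / (2 * Real.pi)) :
    (∫ θ in (0:ℝ)..1, dd2 h 1 ((θ : ℂ) + (ε : ℂ) * Complex.I)) = 0 := by
  have hint : IntervalIntegrable (fun θ : ℝ => dd2 h 1 ((θ : ℂ) + (ε : ℂ) * Complex.I))
      MeasureTheory.volume 0 1 := by
    apply Continuous.intervalIntegrable
    exact (continuousOn_dd2 hR hcd 1).comp_continuous (continuous_line ε)
      (fun θ => line_mem_strip hR hε θ)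
  have := intervalIntegral.integral_eq_sub_of_hasDerivAt
    (f := fun θ : ℝ => dd h 1 ((θ : ℂ) + (ε : ℂ) * Complex.I))
    (fun θ _ => W3 hR hcd hε θ) hint
  rw [this]
  beta_reduce
  have hper : dd h 1 ((1 : ℝ) + (ε : ℂ) * Complex.I) = dd h 1 ((0 : ℝ) + (ε : ℂ) * Complex.I) := by
    have harg : ((1:ℝ) : ℂ) + (ε : ℂ) * Complex.I = (((0:ℝ):ℂ) + (ε : ℂ) * Complex.I) + 1 := by
      push_cast; ring
    simp only [dd, cdir, harg, Phi_period]
  beta_reduce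
  rw [hper, sub_self]

end PartD3

section PartD4
variable {R : ℝ} {h : ℂ → ℝ}

lemma deriv_under_integral (hR : 1 < R) {F F' : ℂ → ℝ}
    (hFcont : ContinuousOn F (strip R)) (hF'cont : ContinuousOn F' (strip R))
    (hder : ∀ (θ : ℝ) {x : ℝ}, |x| < Real.log R / (2 * Real.pi) →
      HasDerivAt (fun ε : ℝ => F ((θ : ℂ) + (ε : ℂ) * Complex.I))
        (F' ((θ : ℂ) + (x : ℂ) * Complex.I)) x)
    {ε₀ : ℝ} (hε₀ : |ε₀| < Real.log R / (2 * Real.pi)) :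
    HasDerivAt (fun ε : ℝ => ∫ θ in (0:ℝ)..1, F ((θ : ℂ) + (ε : ℂ) * Complex.I))
      (∫ θ in (0:ℝ)..1, F' ((θ : ℂ) + (ε₀ : ℂ) * Complex.I)) ε₀ := by
  set r := Real.log R / (2 * Real.pi) with hrdef
  set δ := (r - |ε₀|) / 2 with hδdef
  have hδ : 0 < δ := by simp only [hδdef]; linarith
  have hball : ∀ x ∈ Metric.ball ε₀ δ, |x| < r := by
    intro x hx
    rw [Metric.mem_ball, Real.dist_eq] at hx
    calc |x| = |ε₀ + (x - ε₀)| := by ring_nf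
      _ ≤ |ε₀| + |x - ε₀| := abs_add_le _ _
      _ < |ε₀| + δ := by linarith
      _ ≤ r := by simp only [hδdef]; linarith
  -- compact set and bound
  set K : Set ℂ := (fun p : ℝ × ℝ => ((p.1 : ℂ) + (p.2 : ℂ) * Complex.I)) ''
    (Set.Icc 0 1 ×ˢ Set.Icc (ε₀ - δ) (ε₀ + δ)) with hKdef
  have hKcomp : IsCompact K :=
    (isCompact_Icc.prod isCompact_Icc).image (by continuity)
  have hKs : K ⊆ strip R := by
    rintro ζ ⟨⟨θ, x⟩, ⟨hθ, hx⟩, rfl⟩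
    have : |x| < r := by
      rw [Set.mem_Icc] at hx
      rw [abs_lt]
      constructor <;> [linarith [neg_abs_le ε₀]; linarith [le_abs_self ε₀]]
    exact line_mem_strip hR this θ
  obtain ⟨M, hM⟩ := hKcomp.exists_bound_of_continuousOn (hF'cont.mono hKs)
  have hcont_line : ∀ {x : ℝ}, |x| < r →
      Continuous fun θ : ℝ => F ((θ : ℂ) + (x : ℂ) * Complex.I) := fun hx =>
    hFcont.comp_continuous (continuous_line _) (fun θ => line_mem_strip hR hx θ)
  have hcont_line' : ∀ {x : ℝ}, |x| < r →
      Continuous fun θ : ℝ => F' ((θ : ℂ) + (x : ℂ) * Complex.I) := fun hx =>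
    hF'cont.comp_continuous (continuous_line _) (fun θ => line_mem_strip hR hx θ)
  have key := intervalIntegral.hasDerivAt_integral_of_dominated_loc_of_deriv_le
    (F := fun (x : ℝ) (θ : ℝ) => F ((θ : ℂ) + (x : ℂ) * Complex.I))
    (F' := fun (x : ℝ) (θ : ℝ) => F' ((θ : ℂ) + (x : ℂ) * Complex.I))
    (bound := fun _ => M) (a := 0) (b := 1) (μ := MeasureTheory.volume) (x₀ := ε₀) (Metric.ball_mem_nhds ε₀ hδ)
    ?_ ?_ ?_ ?_ ?_ ?_
  · exact key.2
  · -- measurability eventually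
    have : ∀ᶠ x in nhds ε₀, |x| < r := by
      have : IsOpen {x : ℝ | |x| < r} :=
        isOpen_Iio.preimage _root_.continuous_abs
      exact this.mem_nhds hε₀
    exact this.mono fun x hx => (hcont_line hx).aestronglyMeasurable.restrict
  · exact (hcont_line hε₀).intervalIntegrable _ _
  · exact (hcont_line' hε₀).aestronglyMeasurable.restrict
  · refine Filter.Eventually.of_forall fun θ => fun hθ x hx => ?_
    have hθ' : θ ∈ Set.Ioc (0:ℝ) 1 := by
      rwa [Set.uIoc_of_le (by norm_num : (0:ℝ) ≤ 1)] at hθ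
    refine hM _ ?_
    rw [Metric.mem_ball, Real.dist_eq] at hx
    exact ⟨(θ, x), ⟨Set.mem_Icc.mpr ⟨le_of_lt hθ'.1, hθ'.2⟩,
      Set.mem_Icc.mpr ⟨by linarith [abs_lt.mp hx], by linarith [abs_lt.mp hx]⟩⟩, rfl⟩
  · exact intervalIntegrable_const
  · exact Filter.Eventually.of_forall fun θ => fun _ x hx => hder θ (hball x hx)
end PartD4

section PartD5
variable {R : ℝ} {h : ℂ → ℝ}

lemma fderiv_zero_of_hasDerivAt_zero {f : ℝ → ℝ} {x : ℝ} (hf : HasDerivAt f 0 x) :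
    fderiv ℝ f x = 0 := by
  rw [hf.hasFDerivAt.fderiv]
  ext t
  simp

lemma const_on_Ioo {r : ℝ} (hr : 0 < r) {f : ℝ → ℝ}
    (hf : ∀ x ∈ Set.Ioo (-r) r, HasDerivAt f 0 x) :
    ∀ x ∈ Set.Ioo (-r) r, f x = f 0 := by
  intro x hx
  have h0 : (0:ℝ) ∈ Set.Ioo (-r) r := by constructor <;> simp [hr] <;> linarith
  refine Convex.is_const_of_fderivWithin_eq_zero (𝕜 := ℝ) (convex_Ioo _ _) ?_ ?_ hx h0
  · exact fun y hy => ((hf y hy).differentiableAt).differentiableWithinAt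
  · intro y hy
    rw [fderivWithin_of_isOpen isOpen_Ioo hy]
    exact fderiv_zero_of_hasDerivAt_zero (hf y hy)

lemma Phi_inv_conj (θ ε : ℝ) :
    ((starRingEnd ℂ) (Phi ((θ : ℂ) + (ε : ℂ) * Complex.I)))⁻¹
      = Phi ((θ : ℂ) + ((-ε : ℝ) : ℂ) * Complex.I) := by
  rw [Phi, Phi, ← Complex.exp_conj, ← Complex.exp_neg]
  congr 1
  simp only [map_mul, map_add, map_ofNat, Complex.conj_ofReal, Complex.conj_I]
  push_cast
  ring

lemma circle_avg (hR : 1 < R) (hcd : ContDiffOn ℝ 2 h (annulus R))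
    (hlap : ∀ z ∈ annulus R, secondDirDeriv h 1 z + secondDirDeriv h Complex.I z = 0)
    (hsymh : ∀ z ∈ annulus R, h z = h (((starRingEnd ℂ) z)⁻¹)) :
    ∃ b : ℝ, ∀ ε : ℝ, |ε| < Real.log R / (2 * Real.pi) →
      (∫ θ in (0:ℝ)..1, h (Phi ((θ : ℂ) + (ε : ℂ) * Complex.I))) = b := by
  set r := Real.log R / (2 * Real.pi) with hrdef
  have hr0 : 0 < r := div_pos (Real.log_pos hR) (by positivity)
  set A : ℝ → ℝ := fun ε => ∫ θ in (0:ℝ)..1, h (Phi ((θ : ℂ) + (ε : ℂ) * Complex.I)) with hAdef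
  set A1 : ℝ → ℝ := fun ε => ∫ θ in (0:ℝ)..1, dd h Complex.I ((θ : ℂ) + (ε : ℂ) * Complex.I)
    with hA1def
  have hmaps : Set.MapsTo Phi (strip R) (annulus R) := fun ζ hζ => Phi_mem hR hζ
  have hcF : ContinuousOn (fun ζ => h (Phi ζ)) (strip R) :=
    hcd.continuousOn.comp continuous_Phi.continuousOn hmaps
  have habs : ∀ x : ℝ, x ∈ Set.Ioo (-r) r ↔ |x| < r := by
    intro x; rw [Set.mem_Ioo, abs_lt]
  -- first derivative
  have DA : ∀ {ε₀ : ℝ}, |ε₀| < r → HasDerivAt A (A1 ε₀) ε₀ := fun hε₀ =>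
    deriv_under_integral hR hcF (continuousOn_dd hR hcd Complex.I)
      (fun θ x hx => W1 hR hcd θ hx) hε₀
  -- second derivative is zero
  have DA1 : ∀ {ε₀ : ℝ}, |ε₀| < r → HasDerivAt A1 0 ε₀ := by
    intro ε₀ hε₀
    have hD := deriv_under_integral hR (continuousOn_dd hR hcd Complex.I)
      (continuousOn_dd2 hR hcd Complex.I) (fun θ x hx => W2 hR hcd θ hx) hε₀
    have hzero : (∫ θ in (0:ℝ)..1, dd2 h Complex.I ((θ : ℂ) + (ε₀ : ℂ) * Complex.I)) = 0 := by
      have hcongr : (∫ θ in (0:ℝ)..1, dd2 h Complex.I ((θ : ℂ) + (ε₀ : ℂ) * Complex.I))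
          = ∫ θ in (0:ℝ)..1, -(dd2 h 1 ((θ : ℂ) + (ε₀ : ℂ) * Complex.I)) := by
        refine intervalIntegral.integral_congr fun θ _ => ?_
        have := dd2_sum hR hcd hlap (line_mem_strip hR hε₀ θ)
        linarith
      rw [hcongr, intervalIntegral.integral_neg, flux_zero hR hcd hε₀, neg_zero]
    rwa [hzero] at hD
  -- A1 is constant on Ioo
  have hA1const : ∀ x ∈ Set.Ioo (-r) r, A1 x = A1 0 :=
    const_on_Ioo hr0 (fun x hx => DA1 ((habs x).mp hx))
  -- A minus the linear part is constant
  set c := A1 0 with hcdef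
  have hBconst : ∀ x ∈ Set.Ioo (-r) r, A x - c * x = A 0 - c * 0 := by
    refine const_on_Ioo hr0 (fun x hx => ?_) 
    have h1 : HasDerivAt (fun y : ℝ => A y - c * y) (A1 x - c * 1) x :=
      (DA ((habs x).mp hx)).sub ((hasDerivAt_id x).const_mul c)
    have := hA1const x hx
    rw [this] at h1
    simpa using h1
  -- evenness of A
  have hAeven : ∀ {ε : ℝ}, |ε| < r → A (-ε) = A ε := by
    intro ε hε
    refine intervalIntegral.integral_congr fun θ _ => ?_
    have hz : Phi ((θ : ℂ) + (ε : ℂ) * Complex.I) ∈ annulus R :=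
      Phi_mem hR (line_mem_strip hR hε θ)
    have := hsymh _ hz
    rw [Phi_inv_conj θ ε] at this
    rw [← this]
  -- slope vanishes
  have hc0 : c = 0 := by
    have hhalf : |r/2| < r := by rw [abs_of_pos (by linarith)]; linarith
    have hhalf' : (r/2 : ℝ) ∈ Set.Ioo (-r) r := (habs _).mpr hhalf
    have hhalfneg : (-(r/2) : ℝ) ∈ Set.Ioo (-r) r := by
      rw [habs]; rw [abs_neg]; exact hhalf
    have e1 := hBconst _ hhalf'
    have e2 := hBconst _ hhalfneg
    have e3 : A (-(r/2)) = A (r/2) := hAeven hhalf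
    rw [e3] at e2
    have : c * (r/2) = c * (-(r/2)) := by linarith
    have hr2 : (r/2 : ℝ) ≠ 0 := by positivity
    nlinarith [this]
  refine ⟨A 0, fun ε hε => ?_⟩
  have := hBconst ε ((habs ε).mpr hε)
  rw [hc0] at this
  simpa using this

end PartD5

/-- the circle averages of the harmonic part are constant. -/
theorem harmonic_part_circle_average_constant
    (R : ℝ) (hR : 1 < R)
    (μ : Measure ℂ) (hfin : IsFiniteMeasure μ)
    (hsupp : μ (annulus R)ᶜ = 0)
    (hinv : Measure.map (fun z : ℂ => ((starRingEnd ℂ) z)⁻¹) μ = μ)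
    (h : ℂ → ℝ)
    (hcont : ContinuousOn h (closedAnnulus R))
    (hharm : HarmonicOnSet h (annulus R))
    (hsym : ∀ z ∈ annulus R,
      (∫ w, 2 * Real.pi * greenR R z w ∂μ) + h z
        = (∫ w, 2 * Real.pi * greenR R ((starRingEnd ℂ) z)⁻¹ w ∂μ)
          + h ((starRingEnd ℂ) z)⁻¹) :
    ∃ b : ℝ, ∀ ε : ℝ, |ε| < Real.log R / (2 * Real.pi) →
      (∫ θ in (0:ℝ)..1,
          h (Complex.exp (2 * Real.pi * Complex.I * ((θ : ℂ) + (ε : ℂ) * Complex.I)))) = b := by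
  obtain ⟨hcd, hlap⟩ := hharm
  have hsymh := h_symm_all hR hfin hsupp hinv hcd hsym
  obtain ⟨b, hb⟩ := circle_avg hR hcd hlap hsymh
  exact ⟨b, fun ε hε => by simpa [Phi] using hb ε hε⟩

end
end

section
/- Let R > 1, let 1/R ≤ r ≤ R, and let w ∈ 𝒜_R. Then ∫₀¹ Γ_R(r·e^{2πiθ}, w) dθ = (log(r/R)/(4π·log R))·log(|w|/R) − (log R)/(2π). -/
open MeasureTheory Filter

noncomputable section

section CircleAverageAux

open Complex Metric intervalIntegral

noncomputable section

lemma mean_log_abs (c : ℂ) (hc : ‖c‖ < 1) :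
    ∫ θ in (0:ℝ)..1,
      Real.log (‖1 - c * Complex.exp (2 * Real.pi * Complex.I * θ)‖) = 0 := by
  set f : ℂ → ℂ := fun z => Complex.log (1 - c * z) with hf
  have hmem : ∀ z : ℂ, ‖z‖ ≤ 1 → 1 - c * z ∈ Complex.slitPlane := by
    intro z hz
    rw [Complex.mem_slitPlane_iff]
    left
    have h1 : (c * z).re ≤ ‖c * z‖ := Complex.re_le_norm _
    have h2 : ‖c * z‖ ≤ ‖c‖ * 1 := by
      rw [norm_mul]
      exact mul_le_mul_of_nonneg_left hz (norm_nonneg c)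
    simp only [Complex.sub_re, Complex.one_re]
    linarith
  have hd : DifferentiableOn ℂ f (closedBall (0:ℂ) 1) := by
    intro z hz
    simp only [mem_closedBall, dist_zero_right] at hz
    refine ((Complex.differentiableAt_log (hmem z hz)).comp (f := fun z : ℂ => 1 - c * z) z
      (by fun_prop)).differentiableWithinAt
  have hcauchy := hd.circleIntegral_sub_inv_smul (w := 0)
    (by simp [mem_ball]) 
  simp only [hf, mul_zero, sub_zero, Complex.log_one, smul_zero] at hcauchy
  rw [circleIntegral] at hcauchy
  simp only [deriv_circleMap] at hcauchy
  have hsimp : ∀ θ : ℝ, (circleMap 0 1 θ * Complex.I) • (circleMap 0 1 θ)⁻¹ • Complex.log (1 - c * circleMap 0 1 θ)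
      = Complex.I * f (circleMap 0 1 θ) := by
    intro θ
    have hne : circleMap 0 1 θ ≠ 0 := by
      intro h
      have := norm_circleMap_zero 1 θ
      rw [h] at this; simp at this
    simp only [smul_eq_mul, hf]
    rw [mul_comm (circleMap 0 1 θ) Complex.I, mul_assoc, ← mul_assoc (circleMap 0 1 θ),
      mul_inv_cancel₀ hne, one_mul]
  rw [intervalIntegral.integral_congr (fun θ _ => hsimp θ)] at hcauchy
  rw [intervalIntegral.integral_const_mul] at hcauchy
  have hint : (∫ θ in (0:ℝ)..2*Real.pi, f (circleMap 0 1 θ)) = 0 := by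
    rcases mul_eq_zero.1 hcauchy with h | h
    · exact absurd h Complex.I_ne_zero
    · exact h
  set g : ℝ → ℝ := fun t => Real.log (‖1 - c * circleMap 0 1 t‖) with hg
  have hcont : Continuous fun t : ℝ => f (circleMap 0 1 t) := by
    apply Continuous.clog (by fun_prop)
    intro t
    exact hmem _ (by rw [norm_circleMap_zero]; simp)
  have hginteq : ∀ t : ℝ, (f (circleMap 0 1 t)).re = g t := by
    intro t; simp [hf, hg, Complex.log_re]
  have hre : (∫ t in (0:ℝ)..2*Real.pi, g t) = 0 := by
    have hInt : IntervalIntegrable (fun t : ℝ => f (circleMap 0 1 t)) volume 0 (2*Real.pi) :=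
      hcont.intervalIntegrable _ _
    calc (∫ t in (0:ℝ)..2*Real.pi, g t)
        = ∫ t in (0:ℝ)..2*Real.pi, Complex.reCLM (f (circleMap 0 1 t)) :=
          intervalIntegral.integral_congr fun t _ => (hginteq t).symm
      _ = Complex.reCLM (∫ t in (0:ℝ)..2*Real.pi, f (circleMap 0 1 t)) :=
          Complex.reCLM.intervalIntegral_comp_comm hInt
      _ = 0 := by rw [hint]; simp
  have hkey : ∀ θ : ℝ, Real.log (‖1 - c * Complex.exp (2 * Real.pi * Complex.I * θ)‖)
      = g (2 * Real.pi * θ) := by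
    intro θ
    simp only [hg, circleMap, ofReal_one, one_mul, zero_add]
    congr 3
    push_cast
    ring
  calc ∫ θ in (0:ℝ)..1, Real.log (‖1 - c * Complex.exp (2 * Real.pi * Complex.I * θ)‖)
      = ∫ θ in (0:ℝ)..1, g (2 * Real.pi * θ) := intervalIntegral.integral_congr fun θ _ => hkey θ
    _ = (2*Real.pi)⁻¹ • ∫ t in (2*Real.pi*0)..(2*Real.pi*1), g t := by
        exact intervalIntegral.integral_comp_mul_left g (by positivity)
    _ = 0 := by
        rw [mul_zero, mul_one, hre, smul_zero]

end

noncomputable section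

lemma absE (θ : ℝ) : ‖Complex.exp (2 * Real.pi * Complex.I * θ)‖ = 1 := by
  rw [show (2 * Real.pi * Complex.I * θ : ℂ) = ((2 * Real.pi * θ : ℝ) : ℂ) * Complex.I by
    push_cast; ring]
  exact Complex.norm_exp_ofReal_mul_I _

lemma conjE (θ : ℝ) : (starRingEnd ℂ) (Complex.exp (2 * Real.pi * Complex.I * θ))
    = (Complex.exp (2 * Real.pi * Complex.I * θ))⁻¹ := by
  have h : (starRingEnd ℂ) (2 * Real.pi * Complex.I * θ : ℂ)
      = -(2 * Real.pi * Complex.I * θ : ℂ) := by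
    simp only [map_mul, Complex.conj_I, map_ofNat, Complex.conj_ofReal]
    ring
  rw [← Complex.exp_conj, h, Complex.exp_neg]

lemma abs_conj_form (a : ℂ) (θ : ℝ) :
    ‖1 - a * (Complex.exp (2 * Real.pi * Complex.I * θ))⁻¹‖
      = ‖1 - (starRingEnd ℂ) a * Complex.exp (2 * Real.pi * Complex.I * θ)‖ := by
  have h : (1 - (starRingEnd ℂ) a * Complex.exp (2 * Real.pi * Complex.I * θ))
      = (starRingEnd ℂ) (1 - a * (Complex.exp (2 * Real.pi * Complex.I * θ))⁻¹) := by
    rw [map_sub, map_one, map_mul, map_inv₀, conjE, inv_inv]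
  rw [h, Complex.norm_conj]

lemma le_abs_one_sub_mul (c u : ℂ) (hu : ‖u‖ = 1) :
    1 - ‖c‖ ≤ ‖1 - c * u‖ := by
  have h := norm_sub_norm_le (1 : ℂ) (c * u)
  simpa [hu] using h

lemma abs_one_sub_mul_le (c u : ℂ) (hu : ‖u‖ = 1) :
    ‖1 - c * u‖ ≤ 1 + ‖c‖ := by
  have h := norm_sub_le (1 : ℂ) (c * u)
  simpa [hu] using h

lemma log_abs_le {c : ℂ} {ρ : ℝ} (hc : ‖c‖ ≤ ρ) (hρ : ρ < 1) (θ : ℝ) :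
    |Real.log (‖1 - c * Complex.exp (2 * Real.pi * Complex.I * θ)‖)|
      ≤ ‖c‖ / (1 - ρ) := by
  set x := ‖c‖ with hx
  have hx0 : 0 ≤ x := norm_nonneg c
  have hx1 : x < 1 := lt_of_le_of_lt hc hρ
  have hlb := le_abs_one_sub_mul c _ (absE θ)
  have hub := abs_one_sub_mul_le c _ (absE θ)
  have hF0 : (0:ℝ) < 1 - x := by linarith
  have key : |Real.log (‖1 - c * Complex.exp (2 * Real.pi * Complex.I * θ)‖)|
      ≤ -Real.log (1 - x) := by
    rw [abs_le]
    constructor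
    · have := Real.log_le_log hF0 hlb
      have h2 : Real.log (1-x) ≤ 0 := Real.log_nonpos (by linarith) (by linarith)
      linarith [Real.log_le_log hF0 hlb]
    · have h1 : Real.log (‖1 - c * Complex.exp (2 * Real.pi * Complex.I * θ)‖)
          ≤ Real.log (1 + x) := Real.log_le_log (lt_of_lt_of_le hF0 hlb) hub
      have h2 : Real.log (1 + x) + Real.log (1 - x) ≤ 0 := by
        rw [← Real.log_mul (by linarith) (by linarith)]
        exact Real.log_nonpos (by nlinarith) (by nlinarith)
      linarith
  have h3 : -Real.log (1 - x) ≤ x / (1 - x) := by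
    rw [← Real.log_inv]
    have := Real.log_le_sub_one_of_pos (inv_pos.2 hF0)
    have h4 : (1 - x)⁻¹ - 1 = x / (1-x) := by field_simp; ring
    linarith [h4 ▸ this]
  have h5 : x / (1 - x) ≤ x / (1 - ρ) := by
    apply div_le_div_of_nonneg_left hx0 (by linarith) (by linarith)
  linarith

end

noncomputable section

variable {c d : ℕ → ℂ} {ρ q : ℝ}

lemma abs_c_le_rho (hρ0 : 0 ≤ ρ) (hq0 : 0 ≤ q) (hq1 : q < 1)
    (hc : ∀ k, ‖c k‖ ≤ ρ * q ^ k) (k : ℕ) : ‖c k‖ ≤ ρ := by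
  refine (hc k).trans ?_
  calc ρ * q ^ k ≤ ρ * 1 := by gcongr; exact pow_le_one₀ hq0 hq1.le
    _ = ρ := mul_one ρ

lemma pos_F (c₀ : ℂ) (h : ‖c₀‖ < 1) (θ : ℝ) :
    0 < ‖1 - c₀ * Complex.exp (2 * Real.pi * Complex.I * θ)‖ :=
  lt_of_lt_of_le (by linarith) (le_abs_one_sub_mul c₀ _ (absE θ))

lemma summable_log_family (hρ0 : 0 ≤ ρ) (hρ1 : ρ < 1) (hq0 : 0 ≤ q) (hq1 : q < 1)
    (hc : ∀ k, ‖c k‖ ≤ ρ * q ^ k) (θ : ℝ) :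
    Summable fun k =>
      Real.log (‖1 - c k * Complex.exp (2 * Real.pi * Complex.I * θ)‖) := by
  have hg : Summable fun k : ℕ => ρ / (1 - ρ) * q ^ k :=
    (summable_geometric_of_lt_one hq0 hq1).mul_left _
  refine Summable.of_norm_bounded hg fun k => ?_
  rw [Real.norm_eq_abs]
  calc |Real.log (‖1 - c k * Complex.exp (2 * Real.pi * Complex.I * θ)‖)|
      ≤ ‖c k‖ / (1 - ρ) := log_abs_le (abs_c_le_rho hρ0 hq0 hq1 hc k) hρ1 θ
    _ ≤ (ρ * q ^ k) / (1 - ρ) := by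
        apply div_le_div_of_nonneg_right (hc k)
        linarith
    _ = ρ / (1 - ρ) * q ^ k := by ring

lemma summable_log_pair (hρ0 : 0 ≤ ρ) (hρ1 : ρ < 1) (hq0 : 0 ≤ q) (hq1 : q < 1)
    (hc : ∀ k, ‖c k‖ ≤ ρ * q ^ k) (hd : ∀ k, ‖d k‖ ≤ ρ * q ^ k)
    (θ : ℝ) :
    Summable fun k =>
      Real.log (‖1 - c k * Complex.exp (2 * Real.pi * Complex.I * θ)‖)
        + Real.log (‖1 - d k * Complex.exp (2 * Real.pi * Complex.I * θ)‖) :=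
  (summable_log_family hρ0 hρ1 hq0 hq1 hc θ).add (summable_log_family hρ0 hρ1 hq0 hq1 hd θ)

lemma log_tprod_pair (hρ0 : 0 ≤ ρ) (hρ1 : ρ < 1) (hq0 : 0 ≤ q) (hq1 : q < 1)
    (hc : ∀ k, ‖c k‖ ≤ ρ * q ^ k) (hd : ∀ k, ‖d k‖ ≤ ρ * q ^ k)
    (θ : ℝ) :
    Real.log (∏' k : ℕ,
        (‖1 - c k * Complex.exp (2 * Real.pi * Complex.I * θ)‖
          * ‖1 - d k * Complex.exp (2 * Real.pi * Complex.I * θ)‖))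
      = ∑' k : ℕ,
        (Real.log (‖1 - c k * Complex.exp (2 * Real.pi * Complex.I * θ)‖)
          + Real.log (‖1 - d k * Complex.exp (2 * Real.pi * Complex.I * θ)‖)) := by
  have hposc : ∀ k, 0 < ‖1 - c k * Complex.exp (2 * Real.pi * Complex.I * θ)‖ :=
    fun k => pos_F _ (lt_of_le_of_lt (abs_c_le_rho hρ0 hq0 hq1 hc k) hρ1) θ
  have hposd : ∀ k, 0 < ‖1 - d k * Complex.exp (2 * Real.pi * Complex.I * θ)‖ :=
    fun k => pos_F _ (lt_of_le_of_lt (abs_c_le_rho hρ0 hq0 hq1 hd k) hρ1) θ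
  have hsum : ∀ x : ℝ, Summable fun k : ℕ =>
      Real.log (‖1 - c k * Complex.exp (2 * Real.pi * Complex.I * x)‖
        * ‖1 - d k * Complex.exp (2 * Real.pi * Complex.I * x)‖) := by
    intro x
    have := summable_log_pair hρ0 hρ1 hq0 hq1 hc hd x
    apply this.congr
    intro k
    rw [Real.log_mul (pos_F _ (lt_of_le_of_lt (abs_c_le_rho hρ0 hq0 hq1 hc k) hρ1) x).ne'
      (pos_F _ (lt_of_le_of_lt (abs_c_le_rho hρ0 hq0 hq1 hd k) hρ1) x).ne']
  have hprod := (Real.rexp_tsum_eq_tprod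
    (f := fun (k : ℕ) => (fun (x : ℝ) =>
      ‖1 - c k * Complex.exp (2 * Real.pi * Complex.I * x)‖
        * ‖1 - d k * Complex.exp (2 * Real.pi * Complex.I * x)‖) θ)
    (fun k => mul_pos (pos_F _ (lt_of_le_of_lt (abs_c_le_rho hρ0 hq0 hq1 hc k) hρ1) θ)
      (pos_F _ (lt_of_le_of_lt (abs_c_le_rho hρ0 hq0 hq1 hd k) hρ1) θ)) (hsum θ))
  simp only [Function.comp] at hprod
  rw [← hprod, Real.log_exp]
  exact tsum_congr fun k => Real.log_mul (hposc k).ne' (hposd k).ne'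

lemma tprod_pair_pos (hρ0 : 0 ≤ ρ) (hρ1 : ρ < 1) (hq0 : 0 ≤ q) (hq1 : q < 1)
    (hc : ∀ k, ‖c k‖ ≤ ρ * q ^ k) (hd : ∀ k, ‖d k‖ ≤ ρ * q ^ k)
    (θ : ℝ) :
    0 < ∏' k : ℕ,
        (‖1 - c k * Complex.exp (2 * Real.pi * Complex.I * θ)‖
          * ‖1 - d k * Complex.exp (2 * Real.pi * Complex.I * θ)‖) := by
  have hsum : ∀ x : ℝ, Summable fun k : ℕ =>
      Real.log (‖1 - c k * Complex.exp (2 * Real.pi * Complex.I * x)‖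
        * ‖1 - d k * Complex.exp (2 * Real.pi * Complex.I * x)‖) := by
    intro x
    have := summable_log_pair hρ0 hρ1 hq0 hq1 hc hd x
    apply this.congr
    intro k
    rw [Real.log_mul (pos_F _ (lt_of_le_of_lt (abs_c_le_rho hρ0 hq0 hq1 hc k) hρ1) x).ne'
      (pos_F _ (lt_of_le_of_lt (abs_c_le_rho hρ0 hq0 hq1 hd k) hρ1) x).ne']
  have hprod := (Real.rexp_tsum_eq_tprod
    (f := fun (k : ℕ) => (fun (x : ℝ) =>
      ‖1 - c k * Complex.exp (2 * Real.pi * Complex.I * x)‖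
        * ‖1 - d k * Complex.exp (2 * Real.pi * Complex.I * x)‖) θ)
    (fun k => mul_pos (pos_F _ (lt_of_le_of_lt (abs_c_le_rho hρ0 hq0 hq1 hc k) hρ1) θ)
      (pos_F _ (lt_of_le_of_lt (abs_c_le_rho hρ0 hq0 hq1 hd k) hρ1) θ)) (hsum θ))
  simp only [Function.comp] at hprod
  rw [← hprod]
  exact Real.exp_pos _

end

noncomputable section

variable {c d : ℕ → ℂ} {ρ q : ℝ}

lemma log_F_bound (hρ0 : 0 ≤ ρ) (hρ1 : ρ < 1) (hq0 : 0 ≤ q) (hq1 : q < 1)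
    (hc : ∀ k, ‖c k‖ ≤ ρ * q ^ k) (k : ℕ) (θ : ℝ) :
    |Real.log (‖1 - c k * Complex.exp (2 * Real.pi * Complex.I * θ)‖)|
      ≤ ρ / (1 - ρ) * q ^ k := by
  calc |Real.log (‖1 - c k * Complex.exp (2 * Real.pi * Complex.I * θ)‖)|
      ≤ ‖c k‖ / (1 - ρ) := log_abs_le (abs_c_le_rho hρ0 hq0 hq1 hc k) hρ1 θ
    _ ≤ (ρ * q ^ k) / (1 - ρ) := by
        apply div_le_div_of_nonneg_right (hc k)
        linarith
    _ = ρ / (1 - ρ) * q ^ k := by ring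

lemma cont_log_F (c₀ : ℂ) (h : ‖c₀‖ < 1) :
    Continuous fun θ : ℝ =>
      Real.log (‖1 - c₀ * Complex.exp (2 * Real.pi * Complex.I * θ)‖) := by
  apply Continuous.log
  · exact continuous_norm.comp (by fun_prop)
  · exact fun θ => (pos_F c₀ h θ).ne'

lemma cont_log_pair (hρ0 : 0 ≤ ρ) (hρ1 : ρ < 1) (hq0 : 0 ≤ q) (hq1 : q < 1)
    (hc : ∀ k, ‖c k‖ ≤ ρ * q ^ k) (hd : ∀ k, ‖d k‖ ≤ ρ * q ^ k) :
    Continuous fun θ : ℝ => ∑' k : ℕ,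
      (Real.log (‖1 - c k * Complex.exp (2 * Real.pi * Complex.I * θ)‖)
        + Real.log (‖1 - d k * Complex.exp (2 * Real.pi * Complex.I * θ)‖)) := by
  apply continuous_tsum (u := fun k : ℕ => 2 * (ρ / (1 - ρ) * q ^ k))
  · intro k
    exact (cont_log_F _ (lt_of_le_of_lt (abs_c_le_rho hρ0 hq0 hq1 hc k) hρ1)).add
      (cont_log_F _ (lt_of_le_of_lt (abs_c_le_rho hρ0 hq0 hq1 hd k) hρ1))
  · exact ((summable_geometric_of_lt_one hq0 hq1).mul_left _).mul_left 2
  · intro k θ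
    rw [Real.norm_eq_abs]
    calc |Real.log (‖1 - c k * Complex.exp (2 * Real.pi * Complex.I * θ)‖)
          + Real.log (‖1 - d k * Complex.exp (2 * Real.pi * Complex.I * θ)‖)|
        ≤ |Real.log (‖1 - c k * Complex.exp (2 * Real.pi * Complex.I * θ)‖)|
          + |Real.log (‖1 - d k * Complex.exp (2 * Real.pi * Complex.I * θ)‖)| :=
          abs_add_le _ _
      _ ≤ ρ / (1 - ρ) * q ^ k + ρ / (1 - ρ) * q ^ k := by
          exact add_le_add (log_F_bound hρ0 hρ1 hq0 hq1 hc k θ)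
            (log_F_bound hρ0 hρ1 hq0 hq1 hd k θ)
      _ = 2 * (ρ / (1 - ρ) * q ^ k) := by ring

lemma integral_pair_zero (hρ0 : 0 ≤ ρ) (hρ1 : ρ < 1) (hq0 : 0 ≤ q) (hq1 : q < 1)
    (hc : ∀ k, ‖c k‖ ≤ ρ * q ^ k) (hd : ∀ k, ‖d k‖ ≤ ρ * q ^ k) :
    (∫ θ in (0:ℝ)..1, ∑' k : ℕ,
      (Real.log (‖1 - c k * Complex.exp (2 * Real.pi * Complex.I * θ)‖)
        + Real.log (‖1 - d k * Complex.exp (2 * Real.pi * Complex.I * θ)‖))) = 0 := by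
  have hcontk : ∀ k : ℕ, Continuous fun θ : ℝ =>
      Real.log (‖1 - c k * Complex.exp (2 * Real.pi * Complex.I * θ)‖)
        + Real.log (‖1 - d k * Complex.exp (2 * Real.pi * Complex.I * θ)‖) :=
    fun k => (cont_log_F _ (lt_of_le_of_lt (abs_c_le_rho hρ0 hq0 hq1 hc k) hρ1)).add
      (cont_log_F _ (lt_of_le_of_lt (abs_c_le_rho hρ0 hq0 hq1 hd k) hρ1))
  have hint : ∀ k : ℕ, IntegrableOn (fun θ : ℝ =>
      Real.log (‖1 - c k * Complex.exp (2 * Real.pi * Complex.I * θ)‖)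
        + Real.log (‖1 - d k * Complex.exp (2 * Real.pi * Complex.I * θ)‖))
      (Set.Ioc (0:ℝ) 1) volume := fun k =>
    (intervalIntegrable_iff_integrableOn_Ioc_of_le zero_le_one).1
      (((hcontk k)).intervalIntegrable 0 1)
  have hsum : Summable fun k : ℕ => ∫ θ in Set.Ioc (0:ℝ) 1, ‖
      Real.log (‖1 - c k * Complex.exp (2 * Real.pi * Complex.I * θ)‖)
        + Real.log (‖1 - d k * Complex.exp (2 * Real.pi * Complex.I * θ)‖)‖ := by
    apply Summable.of_nonneg_of_le
      (fun k => integral_nonneg fun θ => norm_nonneg _)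
      (fun k => ?_)
      (((summable_geometric_of_lt_one hq0 hq1).mul_left (ρ / (1 - ρ))).mul_left 2)
    calc (∫ θ in Set.Ioc (0:ℝ) 1, ‖
        Real.log (‖1 - c k * Complex.exp (2 * Real.pi * Complex.I * θ)‖)
          + Real.log (‖1 - d k * Complex.exp (2 * Real.pi * Complex.I * θ)‖)‖)
        ≤ ∫ _ in Set.Ioc (0:ℝ) 1, 2 * (ρ / (1 - ρ) * q ^ k) := by
          apply integral_mono ((hint k).norm) (integrableOn_const (by simp))
          intro θ
          simp only [Real.norm_eq_abs]
          calc |Real.log (‖1 - c k * Complex.exp (2 * Real.pi * Complex.I * θ)‖)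
              + Real.log (‖1 - d k * Complex.exp (2 * Real.pi * Complex.I * θ)‖)|
              ≤ _ + _ := abs_add_le _ _
            _ ≤ 2 * (ρ / (1 - ρ) * q ^ k) := by
                have h1 := log_F_bound hρ0 hρ1 hq0 hq1 hc k θ
                have h2 := log_F_bound hρ0 hρ1 hq0 hq1 hd k θ
                linarith
      _ = 2 * (ρ / (1 - ρ) * q ^ k) := by simp
  rw [intervalIntegral.integral_of_le zero_le_one,
    ← MeasureTheory.integral_tsum_of_summable_integral_norm hint hsum]
  have hzero : ∀ k : ℕ, (∫ θ in Set.Ioc (0:ℝ) 1,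
      (Real.log (‖1 - c k * Complex.exp (2 * Real.pi * Complex.I * θ)‖)
        + Real.log (‖1 - d k * Complex.exp (2 * Real.pi * Complex.I * θ)‖))) = 0 := by
    intro k
    rw [← intervalIntegral.integral_of_le zero_le_one]
    rw [intervalIntegral.integral_add
      ((cont_log_F _ (lt_of_le_of_lt (abs_c_le_rho hρ0 hq0 hq1 hc k) hρ1)).intervalIntegrable 0 1)
      ((cont_log_F _ (lt_of_le_of_lt (abs_c_le_rho hρ0 hq0 hq1 hd k) hρ1)).intervalIntegrable 0 1)]
    rw [mean_log_abs _ (lt_of_le_of_lt (abs_c_le_rho hρ0 hq0 hq1 hc k) hρ1),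
      mean_log_abs _ (lt_of_le_of_lt (abs_c_le_rho hρ0 hq0 hq1 hd k) hρ1)]
    ring
  rw [tsum_congr hzero, tsum_zero]

end

-- auxiliary definitions
def c1F (R r : ℝ) (w : ℂ) (k : ℕ) : ℂ := (R:ℂ) ^ (-(4 * ((k:ℤ) + 1))) * r / w
def c2F (R r : ℝ) (w : ℂ) (k : ℕ) : ℂ :=
  (starRingEnd ℂ) ((R:ℂ) ^ (-(4 * ((k:ℤ) + 1))) * w / r)
def c3F (R r : ℝ) (w : ℂ) (k : ℕ) : ℂ :=
  (starRingEnd ℂ) ((R:ℂ) ^ (-(4 * ((k:ℤ) + 1) - 2)) * w * r)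
def c4F (R r : ℝ) (w : ℂ) (k : ℕ) : ℂ := (R:ℂ) ^ (-(4 * ((k:ℤ) + 1) - 2)) / ((r:ℂ) * w)
def qF (R : ℝ) : ℝ := (R^4)⁻¹
def rhoF (R : ℝ) (w : ℂ) : ℝ :=
  max ((R*R)⁻¹) (max (‖w‖ / R) ((R * ‖w‖)⁻¹))

section zpowlemmas

variable {R : ℝ} (hR : 1 < R)

lemma absZpow4 (hR : 1 < R) (k : ℕ) :
    ‖(R:ℂ) ^ (-(4 * ((k:ℤ) + 1)))‖ = qF R ^ k * (R^4)⁻¹ := by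
  have hR0 : (0:ℝ) < R := lt_trans one_pos hR
  rw [norm_zpow, Complex.norm_real, Real.norm_eq_abs, abs_of_pos hR0, qF]
  rw [show -(4 * ((k:ℤ) + 1)) = -(((4*k+4 : ℕ)):ℤ) by push_cast; ring]
  rw [zpow_neg, zpow_natCast, pow_add, pow_mul, mul_inv, ← inv_pow]

lemma absZpow2 (hR : 1 < R) (k : ℕ) :
    ‖(R:ℂ) ^ (-(4 * ((k:ℤ) + 1) - 2))‖ = qF R ^ k * (R^2)⁻¹ := by
  have hR0 : (0:ℝ) < R := lt_trans one_pos hR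
  rw [norm_zpow, Complex.norm_real, Real.norm_eq_abs, abs_of_pos hR0, qF]
  rw [show -(4 * ((k:ℤ) + 1) - 2) = -(((4*k+2 : ℕ)):ℤ) by push_cast; ring]
  rw [zpow_neg, zpow_natCast, pow_add, pow_mul, mul_inv, ← inv_pow]

end zpowlemmas

section bounds

variable {R r : ℝ} {w : ℂ}

lemma qF_nonneg (hR : 1 < R) : 0 ≤ qF R := by
  have : (0:ℝ) < R := lt_trans one_pos hR
  rw [qF]; positivity

lemma qF_lt_one (hR : 1 < R) : qF R < 1 := by
  rw [qF]
  rw [inv_lt_one_iff₀]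
  right
  exact one_lt_pow₀ hR (by norm_num)

lemma rhoF_nonneg (hR : 1 < R) : 0 ≤ rhoF R w := by
  have h : (0:ℝ) < R := lt_trans one_pos hR
  exact le_trans (by positivity : (0:ℝ) ≤ (R*R)⁻¹) (le_max_left _ _)

lemma rhoF_lt_one (hR : 1 < R) (hw1 : 1/R < ‖w‖) (hw2 : ‖w‖ < R) :
    rhoF R w < 1 := by
  have hR0 : (0:ℝ) < R := lt_trans one_pos hR
  have habsw : 0 < ‖w‖ := lt_trans (by positivity) hw1
  have hRw : 1 < R * ‖w‖ := by
    have := (div_lt_iff₀ hR0).1 hw1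
    nlinarith
  refine max_lt ?_ (max_lt ?_ ?_)
  · exact inv_lt_one_of_one_lt₀ (by nlinarith)
  · exact (div_lt_one hR0).2 hw2
  · exact inv_lt_one_of_one_lt₀ hRw

lemma inv_absw_le (hR : 1 < R) (hw1 : 1/R < ‖w‖) : (‖w‖)⁻¹ ≤ R := by
  have hR0 : (0:ℝ) < R := lt_trans one_pos hR
  have habsw : 0 < ‖w‖ := lt_trans (by positivity) hw1
  have hRw : 1 < R * ‖w‖ := by
    have := (div_lt_iff₀ hR0).1 hw1
    nlinarith
  rw [inv_le_comm₀ habsw hR0]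
  rw [one_div] at hw1
  linarith

lemma inv_r_le (hR : 1 < R) (hr₁ : 1/R ≤ r) : r⁻¹ ≤ R := by
  have hR0 : (0:ℝ) < R := lt_trans one_pos hR
  have hr0 : 0 < r := lt_of_lt_of_le (by positivity) hr₁
  rw [inv_le_comm₀ hr0 hR0]
  rw [one_div] at hr₁
  exact hr₁

lemma c1F_bound (hR : 1 < R) (hr₁ : 1/R ≤ r) (hr₂ : r ≤ R)
    (hw1 : 1/R < ‖w‖) (hw2 : ‖w‖ < R) (k : ℕ) :
    ‖c1F R r w k‖ ≤ rhoF R w * qF R ^ k := by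
  have hR0 : (0:ℝ) < R := lt_trans one_pos hR
  have hr0 : 0 < r := lt_of_lt_of_le (by positivity) hr₁
  have habsw : 0 < ‖w‖ := lt_trans (by positivity) hw1
  have hq0 := qF_nonneg hR
  have h1w := inv_absw_le hR hw1
  calc ‖c1F R r w k‖
      = (qF R ^ k * (R^4)⁻¹) * r / ‖w‖ := by
        rw [c1F, norm_div, norm_mul, absZpow4 hR, Complex.norm_real, Real.norm_eq_abs, abs_of_pos hr0]
    _ = ((R^4)⁻¹ * r * (‖w‖)⁻¹) * qF R ^ k := by ring
    _ ≤ ((R^4)⁻¹ * R * R) * qF R ^ k := by gcongr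
    _ = (R*R)⁻¹ * qF R ^ k := by field_simp
    _ ≤ rhoF R w * qF R ^ k := by gcongr; exact le_max_left _ _

lemma c2F_bound (hR : 1 < R) (hr₁ : 1/R ≤ r) (hr₂ : r ≤ R)
    (hw1 : 1/R < ‖w‖) (hw2 : ‖w‖ < R) (k : ℕ) :
    ‖c2F R r w k‖ ≤ rhoF R w * qF R ^ k := by
  have hR0 : (0:ℝ) < R := lt_trans one_pos hR
  have hr0 : 0 < r := lt_of_lt_of_le (by positivity) hr₁
  have habsw : 0 < ‖w‖ := lt_trans (by positivity) hw1
  have hq0 := qF_nonneg hR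
  have h1r := inv_r_le hR hr₁
  calc ‖c2F R r w k‖
      = (qF R ^ k * (R^4)⁻¹) * ‖w‖ / r := by
        rw [c2F, Complex.norm_conj, norm_div, norm_mul, absZpow4 hR, Complex.norm_real, Real.norm_eq_abs,
          abs_of_pos hr0]
    _ = ((R^4)⁻¹ * ‖w‖ * r⁻¹) * qF R ^ k := by ring
    _ ≤ ((R^4)⁻¹ * R * R) * qF R ^ k := by
        have hwle := hw2.le
        gcongr <;> assumption
    _ = (R*R)⁻¹ * qF R ^ k := by field_simp
    _ ≤ rhoF R w * qF R ^ k := by gcongr; exact le_max_left _ _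

lemma c3F_bound (hR : 1 < R) (hr₁ : 1/R ≤ r) (hr₂ : r ≤ R)
    (hw1 : 1/R < ‖w‖) (hw2 : ‖w‖ < R) (k : ℕ) :
    ‖c3F R r w k‖ ≤ rhoF R w * qF R ^ k := by
  have hR0 : (0:ℝ) < R := lt_trans one_pos hR
  have hr0 : 0 < r := lt_of_lt_of_le (by positivity) hr₁
  have habsw : 0 < ‖w‖ := lt_trans (by positivity) hw1
  have hq0 := qF_nonneg hR
  calc ‖c3F R r w k‖
      = (qF R ^ k * (R^2)⁻¹) * ‖w‖ * r := by
        rw [c3F, Complex.norm_conj, norm_mul, norm_mul, absZpow2 hR, Complex.norm_real, Real.norm_eq_abs,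
          abs_of_pos hr0]
    _ = ((R^2)⁻¹ * ‖w‖ * r) * qF R ^ k := by ring
    _ ≤ ((R^2)⁻¹ * ‖w‖ * R) * qF R ^ k := by gcongr
    _ = (‖w‖ / R) * qF R ^ k := by field_simp
    _ ≤ rhoF R w * qF R ^ k := by
        gcongr
        exact le_trans (le_max_left _ _) (le_max_right _ _)

lemma c4F_bound (hR : 1 < R) (hr₁ : 1/R ≤ r) (hr₂ : r ≤ R)
    (hw1 : 1/R < ‖w‖) (hw2 : ‖w‖ < R) (k : ℕ) :
    ‖c4F R r w k‖ ≤ rhoF R w * qF R ^ k := by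
  have hR0 : (0:ℝ) < R := lt_trans one_pos hR
  have hr0 : 0 < r := lt_of_lt_of_le (by positivity) hr₁
  have habsw : 0 < ‖w‖ := lt_trans (by positivity) hw1
  have hq0 := qF_nonneg hR
  have h1r := inv_r_le hR hr₁
  calc ‖c4F R r w k‖
      = (qF R ^ k * (R^2)⁻¹) / (r * ‖w‖) := by
        rw [c4F, norm_div, norm_mul, absZpow2 hR, Complex.norm_real, Real.norm_eq_abs, abs_of_pos hr0]
    _ = ((R^2)⁻¹ * r⁻¹ * (‖w‖)⁻¹) * qF R ^ k := by
        rw [div_eq_mul_inv, mul_inv]; ring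
    _ ≤ ((R^2)⁻¹ * R * (‖w‖)⁻¹) * qF R ^ k := by gcongr
    _ = (R * ‖w‖)⁻¹ * qF R ^ k := by
        rw [mul_inv R (‖w‖)]
        field_simp
    _ ≤ rhoF R w * qF R ^ k := by
        gcongr
        exact le_trans (le_max_right _ _) (le_max_right _ _)

end bounds

end CircleAverageAux

/-- circle average of the regular part `Γ_R` of the Green's function. -/
theorem gamma_circle_average
    (R : ℝ) (hR : 1 < R) (r : ℝ) (hr₁ : 1 / R ≤ r) (hr₂ : r ≤ R)
    (w : ℂ) (hw : w ∈ annulus R) :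
    (∫ θ in (0:ℝ)..1,
        GammaR R ((r : ℂ) * Complex.exp (2 * Real.pi * Complex.I * (θ : ℂ))) w)
      = (Real.log (r / R) / (4 * Real.pi * Real.log R)) * Real.log (‖w‖ / R)
        - Real.log R / (2 * Real.pi) := by
  obtain ⟨hw1, hw2⟩ := hw
  have hR0 : (0:ℝ) < R := lt_trans one_pos hR
  have hr0 : 0 < r := lt_of_lt_of_le (by positivity) hr₁
  have habsw : 0 < ‖w‖ := lt_trans (by positivity) hw1
  have hw0 : w ≠ 0 := by
    intro h; rw [h] at habsw; simp at habsw
  have hρ0 := rhoF_nonneg (w := w) hR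
  have hρ1 := rhoF_lt_one hR hw1 hw2
  have hq0 := qF_nonneg hR
  have hq1 := qF_lt_one hR
  have hc1 := c1F_bound hR hr₁ hr₂ hw1 hw2
  have hc2 := c2F_bound hR hr₁ hr₂ hw1 hw2
  have hc3 := c3F_bound hR hr₁ hr₂ hw1 hw2
  have hc4 := c4F_bound hR hr₁ hr₂ hw1 hw2
  have hpt : ∀ θ : ℝ, GammaR R ((r : ℂ) * Complex.exp (2 * Real.pi * Complex.I * (θ : ℂ))) w
      = Real.log (r / R) * Real.log (‖w‖ / R) / (4 * Real.pi * Real.log R)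
          - Real.log R / (2 * Real.pi)
        + (1 / (2 * Real.pi)) * (∑' k : ℕ,
            (Real.log (‖1 - c1F R r w k * Complex.exp (2*Real.pi*Complex.I*θ)‖)
              + Real.log (‖1 - c2F R r w k * Complex.exp (2*Real.pi*Complex.I*θ)‖)))
        - (1 / (2 * Real.pi)) * (∑' k : ℕ,
            (Real.log (‖1 - c3F R r w k * Complex.exp (2*Real.pi*Complex.I*θ)‖)
              + Real.log (‖1 - c4F R r w k * Complex.exp (2*Real.pi*Complex.I*θ)‖))) := by
    intro θ
    have hE : Complex.exp (2*Real.pi*Complex.I*(θ:ℂ)) ≠ 0 := Complex.exp_ne_zero _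
    have hrc : ((r:ℝ):ℂ) ≠ 0 := by exact_mod_cast hr0.ne'
    have hconjz : (starRingEnd ℂ) ((r:ℂ) * Complex.exp (2*Real.pi*Complex.I*(θ:ℂ)))
        = (r:ℂ) * (Complex.exp (2*Real.pi*Complex.I*(θ:ℂ)))⁻¹ := by
      rw [map_mul, Complex.conj_ofReal, conjE]
    have habsz : ‖(r : ℂ) * Complex.exp (2 * Real.pi * Complex.I * (θ:ℂ))‖ = r := by
      rw [norm_mul, Complex.norm_real, Real.norm_eq_abs, abs_of_pos hr0, absE, mul_one]
    have hP : (∏' k : ℕ, (‖1 - (R : ℂ) ^ (-(4 * ((k : ℤ) + 1)))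
            * ((r:ℂ) * Complex.exp (2 * Real.pi * Complex.I * (θ:ℂ))) / w‖
          * ‖1 - (R : ℂ) ^ (-(4 * ((k : ℤ) + 1))) * w
            / ((r:ℂ) * Complex.exp (2 * Real.pi * Complex.I * (θ:ℂ)))‖))
        = ∏' k : ℕ, (‖1 - c1F R r w k * Complex.exp (2*Real.pi*Complex.I*θ)‖
          * ‖1 - c2F R r w k * Complex.exp (2*Real.pi*Complex.I*θ)‖) := by
      apply tprod_congr
      intro k
      have e1 : 1 - (R : ℂ) ^ (-(4 * ((k : ℤ) + 1)))
            * ((r:ℂ) * Complex.exp (2 * Real.pi * Complex.I * (θ:ℂ))) / w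
          = 1 - c1F R r w k * Complex.exp (2*Real.pi*Complex.I*θ) := by
        rw [c1F]; ring
      have e2 : 1 - (R : ℂ) ^ (-(4 * ((k : ℤ) + 1))) * w
            / ((r:ℂ) * Complex.exp (2 * Real.pi * Complex.I * (θ:ℂ)))
          = 1 - ((R : ℂ) ^ (-(4 * ((k : ℤ) + 1))) * w / (r:ℂ))
            * (Complex.exp (2*Real.pi*Complex.I*(θ:ℂ)))⁻¹ := by
        ring
      rw [e1, e2, abs_conj_form, c2F]
    have hQ : (∏' k : ℕ, (‖1 - (R : ℂ) ^ (-(4 * ((k : ℤ) + 1) - 2)) * w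
            * (starRingEnd ℂ) ((r:ℂ) * Complex.exp (2 * Real.pi * Complex.I * (θ:ℂ)))‖
          * ‖1 - (R : ℂ) ^ (-(4 * ((k : ℤ) + 1) - 2))
            / ((starRingEnd ℂ) ((r:ℂ) * Complex.exp (2 * Real.pi * Complex.I * (θ:ℂ))) * w)‖))
        = ∏' k : ℕ, (‖1 - c3F R r w k * Complex.exp (2*Real.pi*Complex.I*θ)‖
          * ‖1 - c4F R r w k * Complex.exp (2*Real.pi*Complex.I*θ)‖) := by
      apply tprod_congr
      intro k
      rw [hconjz]
      have e3 : 1 - (R : ℂ) ^ (-(4 * ((k : ℤ) + 1) - 2)) * w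
            * ((r:ℂ) * (Complex.exp (2*Real.pi*Complex.I*(θ:ℂ)))⁻¹)
          = 1 - ((R : ℂ) ^ (-(4 * ((k : ℤ) + 1) - 2)) * w * (r:ℂ))
            * (Complex.exp (2*Real.pi*Complex.I*(θ:ℂ)))⁻¹ := by
        ring
      have e4 : 1 - (R : ℂ) ^ (-(4 * ((k : ℤ) + 1) - 2))
            / (((r:ℂ) * (Complex.exp (2*Real.pi*Complex.I*(θ:ℂ)))⁻¹) * w)
          = 1 - c4F R r w k * Complex.exp (2*Real.pi*Complex.I*θ) := by
        rw [c4F]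
        field_simp
      rw [e3, e4, abs_conj_form, c3F]
    rw [GammaR, habsz, hP, hQ]
    have hPpos := tprod_pair_pos hρ0 hρ1 hq0 hq1 hc1 hc2 θ
    have hQpos := tprod_pair_pos hρ0 hρ1 hq0 hq1 hc3 hc4 θ
    rw [Real.log_div hPpos.ne' (mul_pos hR0 hQpos).ne', Real.log_mul hR0.ne' hQpos.ne',
      log_tprod_pair hρ0 hρ1 hq0 hq1 hc1 hc2 θ, log_tprod_pair hρ0 hρ1 hq0 hq1 hc3 hc4 θ]
    ring
  rw [intervalIntegral.integral_congr (fun θ _ => hpt θ)]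
  have hS1c := cont_log_pair hρ0 hρ1 hq0 hq1 hc1 hc2
  have hS2c := cont_log_pair hρ0 hρ1 hq0 hq1 hc3 hc4
  rw [intervalIntegral.integral_sub
    ((continuous_const.fun_add (continuous_const.fun_mul hS1c)).intervalIntegrable 0 1)
    ((continuous_const.fun_mul hS2c).intervalIntegrable 0 1),
    intervalIntegral.integral_add intervalIntegrable_const
    ((continuous_const.fun_mul hS1c).intervalIntegrable 0 1),
    intervalIntegral.integral_const_mul, intervalIntegral.integral_const_mul,
    integral_pair_zero hρ0 hρ1 hq0 hq1 hc1 hc2, integral_pair_zero hρ0 hρ1 hq0 hq1 hc3 hc4,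
    intervalIntegral.integral_const]
  simp
  ring

end
end

section
/- Let k ∈ ℤ \ {0}, let r > 0 with r ≠ 1, let φ ∈ ℝ, and set w = r·e^{2πiφ}. Then ∫₀¹ log|e^{2πiθ} − w|·e^{−2πikθ} dθ = −(e^{−2πikφ}/(2|k|))·r^{|k|} if r < 1, and ∫₀¹ log|e^{2πiθ} − w|·e^{−2πikθ} dθ = −(e^{−2πikφ}/(2|k|))·r^{−|k|} if r > 1. -/
open MeasureTheory Filter Complex intervalIntegral

noncomputable section

lemma orth' (c : ℤ) :
    (∫ θ in (0:ℝ)..1, Complex.exp (2 * (Real.pi:ℂ) * Complex.I * (c:ℂ) * (θ:ℝ)))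
      = if c = 0 then 1 else 0 := by
  rcases eq_or_ne c 0 with rfl | hc
  · simp
  · rw [if_neg hc]
    have h2 : (2 * (Real.pi:ℂ) * Complex.I * (c:ℂ)) ≠ 0 := by
      simp [Real.pi_ne_zero, Complex.I_ne_zero, hc]
    rw [integral_exp_mul_complex h2]
    have h3 : Complex.exp (2 * (Real.pi:ℂ) * Complex.I * (c:ℂ)) = 1 := by
      rw [show (2 * (Real.pi:ℂ) * Complex.I * (c:ℂ)) = (c:ℂ) * (2 * Real.pi * Complex.I) by ring]
      exact Complex.exp_int_mul_two_pi_mul_I c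
    simp [h3]

lemma abs_exp_I_aux (x : ℝ) (z : ℂ) (h : z = (x:ℂ) * Complex.I) :
    ‖Complex.exp z‖ = 1 := by
  rw [h]; exact Complex.norm_exp_ofReal_mul_I x

lemma core (a : ℂ) (ha : ‖a‖ < 1) (n : ℕ) (hn : n ≠ 0) :
    (∫ θ in (0:ℝ)..1,
      ((Real.log (‖1 - a * Complex.exp (2 * (Real.pi:ℂ) * Complex.I * (θ:ℝ))‖) : ℂ))
        * Complex.exp (-2 * (Real.pi:ℂ) * Complex.I * (n:ℂ) * (θ:ℝ)))
      = -a ^ n / (2 * n) := by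
  classical
  set F : ℕ → ℝ → ℂ := fun m θ =>
    -(1/2) * ((a ^ m * Complex.exp (2 * (Real.pi:ℂ) * Complex.I * (m:ℂ) * (θ:ℝ))
        + ((starRingEnd ℂ) a) ^ m * Complex.exp (-2 * (Real.pi:ℂ) * Complex.I * (m:ℂ) * (θ:ℝ))) / (m:ℂ))
      * Complex.exp (-2 * (Real.pi:ℂ) * Complex.I * (n:ℂ) * (θ:ℝ)) with hF
  have habs : ∀ θ : ℝ, ‖Complex.exp (2 * (Real.pi:ℂ) * Complex.I * (θ:ℝ))‖ = 1 := by
    intro θ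
    exact abs_exp_I_aux (2 * Real.pi * θ) _ (by push_cast; ring)
  have hsum : ∀ θ : ℝ, HasSum (fun m => F m θ)
      (((Real.log (‖1 - a * Complex.exp (2 * (Real.pi:ℂ) * Complex.I * (θ:ℝ))‖) : ℂ))
        * Complex.exp (-2 * (Real.pi:ℂ) * Complex.I * (n:ℂ) * (θ:ℝ))) := by
    intro θ
    set z : ℂ := a * Complex.exp (2 * (Real.pi:ℂ) * Complex.I * (θ:ℝ)) with hz
    have hz1 : ‖z‖ < 1 := by
      rw [hz]
      simp only [norm_mul]
      rw [habs θ, mul_one]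
      exact ha
    have h1 := hasSum_taylorSeries_neg_log hz1
    have h2 := h1.star
    have h3 := (h1.add h2).mul_right (-(1/2) * Complex.exp (-2 * (Real.pi:ℂ) * Complex.I * (n:ℂ) * (θ:ℝ)))
    have hfun : (fun m => F m θ)
        = fun (m : ℕ) => (z ^ m / ((m:ℕ):ℂ) + star (z ^ m / ((m:ℕ):ℂ)))
            * (-(1/2) * Complex.exp (-2 * (Real.pi:ℂ) * Complex.I * (n:ℂ) * (θ:ℝ))) := by
      funext m
      rw [hF]
      simp only [star_div₀, star_pow, RCLike.star_def]
      have hc1 : z ^ m = a ^ m * Complex.exp (2 * (Real.pi:ℂ) * Complex.I * (m:ℂ) * (θ:ℝ)) := by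
        rw [hz, mul_pow, ← Complex.exp_nat_mul]
        ring_nf
      have hc2 : ((starRingEnd ℂ) z) ^ m
          = ((starRingEnd ℂ) a) ^ m * Complex.exp (-2 * (Real.pi:ℂ) * Complex.I * (m:ℂ) * (θ:ℝ)) := by
        rw [hz, map_mul, ← Complex.exp_conj, mul_pow, ← Complex.exp_nat_mul]
        have hconj : (starRingEnd ℂ) (2 * (Real.pi:ℂ) * Complex.I * (θ:ℝ))
            = -(2 * (Real.pi:ℂ) * Complex.I * (θ:ℝ)) := by
          simp only [map_mul, Complex.conj_I, Complex.conj_ofReal, map_ofNat]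
          ring
        rw [hconj]
        ring_nf
      rw [hc1, hc2]
      have hm : (starRingEnd ℂ) ((m:ℕ):ℂ) = ((m:ℕ):ℂ) := by simp
      rw [hm]
      ring
    have hval : (((Real.log (‖1 - a * Complex.exp (2 * (Real.pi:ℂ) * Complex.I * (θ:ℝ))‖) : ℝ) : ℂ))
          * Complex.exp (-2 * (Real.pi:ℂ) * Complex.I * (n:ℂ) * (θ:ℝ))
        = (-Complex.log (1 - z) + star (-Complex.log (1 - z)))
            * (-(1/2) * Complex.exp (-2 * (Real.pi:ℂ) * Complex.I * (n:ℂ) * (θ:ℝ))) := by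
      rw [← hz, ← Complex.log_re]
      have hu : (((Complex.log (1 - z)).re : ℝ) : ℂ)
          = (Complex.log (1 - z) + (starRingEnd ℂ) (Complex.log (1 - z))) / 2 := by
        rw [Complex.add_conj]
        push_cast
        ring
      rw [hu]
      simp only [RCLike.star_def, map_neg]
      ring
    rw [hval, hfun]
    exact h3
  -- continuity and integrability
  have hcont : ∀ m : ℕ, Continuous (F m) := by
    intro m
    rw [hF]
    fun_prop
  have hint : ∀ m : ℕ, IntegrableOn (F m) (Set.Ioc (0:ℝ) 1) := fun m =>
    (hcont m).integrableOn_Ioc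
  -- pointwise bound
  have hbound : ∀ (m : ℕ) (θ : ℝ), ‖F m θ‖ ≤ ‖a‖ ^ m := by
    intro m θ
    rw [hF]
    rcases m with _ | m
    · simp
    · have e1 : ‖Complex.exp (2 * (Real.pi:ℂ) * Complex.I * ((m+1:ℕ):ℂ) * (θ:ℝ))‖ = 1 :=
        (abs_exp_I_aux (2 * Real.pi * (m+1) * θ) _ (by push_cast; ring))
      have e2 : ‖Complex.exp (-2 * (Real.pi:ℂ) * Complex.I * ((m+1:ℕ):ℂ) * (θ:ℝ))‖ = 1 :=
        (abs_exp_I_aux (-(2 * Real.pi * (m+1) * θ)) _ (by push_cast; ring))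
      have e3 : ‖Complex.exp (-2 * (Real.pi:ℂ) * Complex.I * (n:ℂ) * (θ:ℝ))‖ = 1 :=
        (abs_exp_I_aux (-(2 * Real.pi * n * θ)) _ (by push_cast; ring))
      rw [norm_mul, norm_mul, norm_neg, norm_div, e3, mul_one]
      have hS : ‖a ^ (m+1) * Complex.exp (2 * (Real.pi:ℂ) * Complex.I * ((m+1:ℕ):ℂ) * (θ:ℝ))
          + ((starRingEnd ℂ) a) ^ (m+1) * Complex.exp (-2 * (Real.pi:ℂ) * Complex.I * ((m+1:ℕ):ℂ) * (θ:ℝ))‖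
          ≤ 2 * ‖a‖ ^ (m+1) := by
        refine (norm_add_le _ _).trans ?_
        simp only [norm_mul, norm_pow, e1, e2, RCLike.norm_conj, mul_one]
        linarith
      have h12 : ‖(1/2 : ℂ)‖ = 1/2 := by norm_num
      have hm1 : ‖((m+1:ℕ):ℂ)‖ = (m:ℝ)+1 := by
        rw [Complex.norm_natCast]; push_cast; ring
      rw [norm_div, norm_one, hm1]
      have h2 : ‖(2:ℂ)‖ = 2 := by norm_num
      rw [h2]
      have hx : (0:ℝ) ≤ ‖a‖ ^ (m+1) := by positivity
      have hmpos : (0:ℝ) < (m:ℝ)+1 := by positivity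
      calc (1:ℝ)/2 * (‖a ^ (m+1) * Complex.exp (2 * (Real.pi:ℂ) * Complex.I * ((m+1:ℕ):ℂ) * (θ:ℝ))
            + ((starRingEnd ℂ) a) ^ (m+1) * Complex.exp (-2 * (Real.pi:ℂ) * Complex.I * ((m+1:ℕ):ℂ) * (θ:ℝ))‖
            / ((m:ℝ)+1))
          ≤ 1/2 * ((2 * ‖a‖ ^ (m+1)) / ((m:ℝ)+1)) := by gcongr
        _ = ‖a‖ ^ (m+1) / ((m:ℝ)+1) := by ring
        _ ≤ ‖a‖ ^ (m+1) := div_le_self hx (by linarith [Nat.cast_nonneg (α := ℝ) m])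
  -- summability of integral norms
  have hsumm : Summable (fun m : ℕ => ∫ θ in Set.Ioc (0:ℝ) 1, ‖F m θ‖) := by
    refine Summable.of_nonneg_of_le (fun m => integral_nonneg (fun θ => norm_nonneg _))
      (fun m => ?_) (summable_geometric_of_lt_one (norm_nonneg a) ha)
    calc (∫ θ in Set.Ioc (0:ℝ) 1, ‖F m θ‖)
        ≤ ∫ _θ in Set.Ioc (0:ℝ) 1, ‖a‖ ^ m := by
          refine integral_mono (hint m).norm ?_ (fun θ => hbound m θ)
          exact integrableOn_const measure_Ioc_lt_top.ne
      _ = ‖a‖ ^ m := by simp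
  -- interchange
  rw [intervalIntegral.integral_of_le zero_le_one]
  have hcongr : (∫ θ in Set.Ioc (0:ℝ) 1,
      ((Real.log (‖1 - a * Complex.exp (2 * (Real.pi:ℂ) * Complex.I * (θ:ℝ))‖) : ℂ))
        * Complex.exp (-2 * (Real.pi:ℂ) * Complex.I * (n:ℂ) * (θ:ℝ)))
      = ∫ θ in Set.Ioc (0:ℝ) 1, ∑' m, F m θ :=
    integral_congr_ae (Filter.Eventually.of_forall (fun θ => ((hsum θ).tsum_eq).symm))
  rw [hcongr, ← integral_tsum_of_summable_integral_norm hint hsumm]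
  -- compute each integral
  have hkey : ∀ m : ℕ, (∫ θ in Set.Ioc (0:ℝ) 1, F m θ)
      = if m = n then -a ^ n / (2 * n) else 0 := by
    intro m
    rw [← intervalIntegral.integral_of_le zero_le_one]
    have hsplit : ∀ θ : ℝ, F m θ
        = (-(1/2) * (a ^ m / (m:ℂ))) * Complex.exp (2 * (Real.pi:ℂ) * Complex.I * (((m:ℤ) - (n:ℤ) : ℤ):ℂ) * (θ:ℝ))
          + (-(1/2) * (((starRingEnd ℂ) a) ^ m / (m:ℂ)))
            * Complex.exp (2 * (Real.pi:ℂ) * Complex.I * (((-(m:ℤ) - (n:ℤ)) : ℤ):ℂ) * (θ:ℝ)) := by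
      intro θ
      rw [hF]
      have hx1 : Complex.exp (2 * (Real.pi:ℂ) * Complex.I * (((m:ℤ) - (n:ℤ) : ℤ):ℂ) * (θ:ℝ))
          = Complex.exp (2 * (Real.pi:ℂ) * Complex.I * (m:ℂ) * (θ:ℝ))
            * Complex.exp (-2 * (Real.pi:ℂ) * Complex.I * (n:ℂ) * (θ:ℝ)) := by
        rw [← Complex.exp_add]
        congr 1
        push_cast
        ring
      have hx2 : Complex.exp (2 * (Real.pi:ℂ) * Complex.I * (((-(m:ℤ) - (n:ℤ)) : ℤ):ℂ) * (θ:ℝ))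
          = Complex.exp (-2 * (Real.pi:ℂ) * Complex.I * (m:ℂ) * (θ:ℝ))
            * Complex.exp (-2 * (Real.pi:ℂ) * Complex.I * (n:ℂ) * (θ:ℝ)) := by
        rw [← Complex.exp_add]
        congr 1
        push_cast
        ring
      rw [hx1, hx2]
      ring
    rw [intervalIntegral.integral_congr (fun θ _ => hsplit θ)]
    have hi1 : IntervalIntegrable (fun θ : ℝ =>
        Complex.exp (2 * (Real.pi:ℂ) * Complex.I * (((m:ℤ) - (n:ℤ) : ℤ):ℂ) * (θ:ℝ))) volume 0 1 :=
      (by fun_prop : Continuous _).intervalIntegrable 0 1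
    have hi2 : IntervalIntegrable (fun θ : ℝ =>
        Complex.exp (2 * (Real.pi:ℂ) * Complex.I * (((-(m:ℤ) - (n:ℤ)) : ℤ):ℂ) * (θ:ℝ))) volume 0 1 :=
      (by fun_prop : Continuous _).intervalIntegrable 0 1
    rw [intervalIntegral.integral_add (hi1.const_mul _) (hi2.const_mul _),
      intervalIntegral.integral_const_mul, intervalIntegral.integral_const_mul,
      orth' ((m:ℤ) - (n:ℤ)), orth' (-(m:ℤ) - (n:ℤ))]
    have hneg : (-(m:ℤ) - (n:ℤ)) ≠ 0 := by
      have : (0:ℤ) < (n:ℤ) := by exact_mod_cast Nat.pos_of_ne_zero hn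
      omega
    rw [if_neg hneg, mul_zero, add_zero]
    rcases eq_or_ne m n with rfl | hmn
    · rw [if_pos (sub_self (m:ℤ)), if_pos rfl, mul_one]
      have hmc : ((m:ℕ):ℂ) ≠ 0 := by
        exact_mod_cast hn
      field_simp
    · rw [if_neg (by
        intro h
        exact hmn (by exact_mod_cast sub_eq_zero.mp h)), if_neg hmn, mul_zero]
  calc (∑' m : ℕ, ∫ θ in Set.Ioc (0:ℝ) 1, F m θ)
      = ∑' m : ℕ, if m = n then -a ^ n / (2 * n) else 0 := tsum_congr hkey
    _ = -a ^ n / (2 * n) := tsum_ite_eq n _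

lemma coeff (a : ℂ) (ha : ‖a‖ < 1) (k : ℤ) (hk : k ≠ 0) :
    (∫ θ in (0:ℝ)..1,
      ((Real.log (‖1 - a * Complex.exp (2 * (Real.pi:ℂ) * Complex.I * (θ:ℝ))‖) : ℂ))
        * Complex.exp (-2 * (Real.pi:ℂ) * Complex.I * (k:ℂ) * (θ:ℝ)))
      = -(if 0 < k then a ^ k.natAbs else ((starRingEnd ℂ) a) ^ k.natAbs) / (2 * (k.natAbs:ℂ)) := by
  set n : ℕ := k.natAbs with hn
  have hn0 : n ≠ 0 := Int.natAbs_ne_zero.mpr hk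
  rcases lt_or_gt_of_ne hk with hneg | hpos
  · -- k < 0 : conjugate
    rw [if_neg (by omega)]
    have hkc : (k:ℂ) = -(n:ℂ) := by
      have : (n:ℤ) = -k := by omega
      have := congrArg (fun x : ℤ => (x:ℂ)) this
      push_cast at this ⊢
      linear_combination this
    have hptw : ∀ θ : ℝ,
        ((Real.log (‖1 - a * Complex.exp (2 * (Real.pi:ℂ) * Complex.I * (θ:ℝ))‖) : ℂ))
          * Complex.exp (-2 * (Real.pi:ℂ) * Complex.I * (k:ℂ) * (θ:ℝ))
        = (starRingEnd ℂ) (((Real.log (‖1 - a * Complex.exp (2 * (Real.pi:ℂ) * Complex.I * (θ:ℝ))‖) : ℂ))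
          * Complex.exp (-2 * (Real.pi:ℂ) * Complex.I * (n:ℂ) * (θ:ℝ))) := by
      intro θ
      rw [map_mul, Complex.conj_ofReal, ← Complex.exp_conj]
      congr 2
      simp only [map_mul, map_neg, Complex.conj_I, Complex.conj_ofReal, map_ofNat, map_natCast]
      rw [hkc]
      ring
    rw [intervalIntegral.integral_congr (fun θ _ => hptw θ)]
    rw [intervalIntegral.integral_of_le zero_le_one, integral_conj,
      ← intervalIntegral.integral_of_le zero_le_one, core a ha n hn0]
    rw [map_div₀, map_neg, map_pow, map_mul, map_ofNat, map_natCast]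
  · -- k > 0
    rw [if_pos hpos]
    have hkc : (k:ℂ) = (n:ℂ) := by
      have : (n:ℤ) = k := by omega
      have := congrArg (fun x : ℤ => (x:ℂ)) this
      push_cast at this ⊢
      linear_combination -this
    have hptw : ∀ θ : ℝ,
        Complex.exp (-2 * (Real.pi:ℂ) * Complex.I * (k:ℂ) * (θ:ℝ))
        = Complex.exp (-2 * (Real.pi:ℂ) * Complex.I * (n:ℂ) * (θ:ℝ)) := by
      intro θ; rw [hkc]
    rw [intervalIntegral.integral_congr (fun θ _ => by rw [hptw θ])]
    exact core a ha n hn0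

/-- Fourier coefficients of `θ ↦ log|e^{2πiθ} - w|` for `w = r·e^{2πiφ}`. -/
theorem fourier_coefficient_of_log_distance
    (k : ℤ) (hk : k ≠ 0) (r : ℝ) (hr : 0 < r) (hr1 : r ≠ 1) (φ : ℝ) (w : ℂ)
    (hw : w = (r : ℂ) * Complex.exp (2 * Real.pi * Complex.I * (φ : ℂ))) :
    (r < 1 →
      (∫ θ in (0:ℝ)..1,
          ((Real.log (‖Complex.exp (2 * Real.pi * Complex.I * (θ : ℂ)) - w‖) : ℂ)
            * Complex.exp (-2 * Real.pi * Complex.I * (k : ℂ) * (θ : ℂ))))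
        = -(Complex.exp (-2 * Real.pi * Complex.I * (k : ℂ) * (φ : ℂ)) / (2 * (k.natAbs : ℂ)))
            * (r : ℂ) ^ (k.natAbs : ℕ)) ∧
    (1 < r →
      (∫ θ in (0:ℝ)..1,
          ((Real.log (‖Complex.exp (2 * Real.pi * Complex.I * (θ : ℂ)) - w‖) : ℂ)
            * Complex.exp (-2 * Real.pi * Complex.I * (k : ℂ) * (θ : ℂ))))
        = -(Complex.exp (-2 * Real.pi * Complex.I * (k : ℂ) * (φ : ℂ)) / (2 * (k.natAbs : ℂ)))
            * (r : ℂ) ^ (-(k.natAbs : ℤ))) := by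

  set n : ℕ := k.natAbs with hn
  have hE : ∀ θ : ℝ, ‖Complex.exp (2 * (Real.pi:ℂ) * Complex.I * (θ:ℝ))‖ = 1 :=
    fun θ => abs_exp_I_aux (2 * Real.pi * θ) _ (by push_cast; ring)
  have habsw : ‖w‖ = r := by
    rw [hw, norm_mul, abs_exp_I_aux (2 * Real.pi * φ) _ (by push_cast; ring), mul_one,
      Complex.norm_of_nonneg hr.le]
  have hw0 : w ≠ 0 := by
    intro h
    rw [h, norm_zero] at habsw
    exact hr.ne habsw
  have hcw : (starRingEnd ℂ) w = (r:ℂ) * Complex.exp (-(2 * (Real.pi:ℂ) * Complex.I * (φ:ℝ))) := by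
    rw [hw, map_mul, ← Complex.exp_conj, Complex.conj_ofReal]
    congr 1
    simp only [map_mul, Complex.conj_I, Complex.conj_ofReal, map_ofNat]
    ring
  constructor
  · -- r < 1
    intro hrlt
    have hacw : ‖(starRingEnd ℂ) w‖ < 1 := by
      rw [Complex.norm_conj, habsw]; exact hrlt
    have hptw : ∀ θ : ℝ, ‖Complex.exp (2 * (Real.pi:ℂ) * Complex.I * (θ:ℝ)) - w‖
        = ‖1 - (starRingEnd ℂ) w * Complex.exp (2 * (Real.pi:ℂ) * Complex.I * (θ:ℝ))‖ := by
      intro θ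
      have hmc : Complex.exp (2 * (Real.pi:ℂ) * Complex.I * (θ:ℝ))
          * (starRingEnd ℂ) (Complex.exp (2 * (Real.pi:ℂ) * Complex.I * (θ:ℝ))) = 1 := by
        rw [Complex.mul_conj, Complex.normSq_eq_norm_sq, hE θ]
        norm_num
      have hfac : (1:ℂ) - (starRingEnd ℂ) w * Complex.exp (2 * (Real.pi:ℂ) * Complex.I * (θ:ℝ))
          = Complex.exp (2 * (Real.pi:ℂ) * Complex.I * (θ:ℝ))
            * (starRingEnd ℂ) (Complex.exp (2 * (Real.pi:ℂ) * Complex.I * (θ:ℝ)) - w) := by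
        rw [map_sub, mul_sub, hmc]
        ring
      rw [hfac, norm_mul, Complex.norm_conj, hE θ, one_mul]
    have key := coeff ((starRingEnd ℂ) w) hacw k hk
    rw [intervalIntegral.integral_congr (fun θ _ => by rw [← hptw θ])] at key
    rw [key]
    rcases lt_or_gt_of_ne hk with hneg | hpos
    · have hkc : (k:ℂ) = -(n:ℂ) := by
        have h1 : (n:ℤ) = -k := by omega
        have h2 := congrArg (fun x : ℤ => (x:ℂ)) h1
        push_cast at h2 ⊢
        linear_combination h2
      rw [if_neg (by omega), Complex.conj_conj, hw, mul_pow, ← Complex.exp_nat_mul,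
        show -2 * (Real.pi:ℂ) * Complex.I * (k:ℂ) * (φ:ℂ)
          = (n:ℂ) * (2 * (Real.pi:ℂ) * Complex.I * (φ:ℂ)) from by rw [hkc]; ring]
      ring
    · have hkc : (k:ℂ) = (n:ℂ) := by
        have h1 : (n:ℤ) = k := by omega
        have h2 := congrArg (fun x : ℤ => (x:ℂ)) h1
        push_cast at h2 ⊢
        linear_combination -h2
      rw [if_pos hpos, hcw, mul_pow, ← Complex.exp_nat_mul,
        show -2 * (Real.pi:ℂ) * Complex.I * (k:ℂ) * (φ:ℂ)
          = (n:ℂ) * (-(2 * (Real.pi:ℂ) * Complex.I * (φ:ℝ))) from by rw [hkc]; push_cast; ring]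
      ring
  · -- r > 1
    intro hrgt
    have hainv : ‖w⁻¹‖ < 1 := by
      rw [norm_inv, habsw]
      rw [inv_lt_one_iff₀]
      right; exact hrgt
    have hne : ∀ θ : ℝ, (1:ℂ) - w⁻¹ * Complex.exp (2 * (Real.pi:ℂ) * Complex.I * (θ:ℝ)) ≠ 0 := by
      intro θ h
      have h1 : ‖w⁻¹ * Complex.exp (2 * (Real.pi:ℂ) * Complex.I * (θ:ℝ))‖ = r⁻¹ := by
        rw [norm_mul, norm_inv, habsw, hE θ, mul_one]
      have h2 : w⁻¹ * Complex.exp (2 * (Real.pi:ℂ) * Complex.I * (θ:ℝ)) = 1 := by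
        linear_combination -h
      rw [h2, norm_one] at h1
      have : r = 1 := by
        field_simp at h1
        linarith
      exact hr1 this
    have hlog : ∀ θ : ℝ,
        (Real.log (‖Complex.exp (2 * (Real.pi:ℂ) * Complex.I * (θ:ℝ)) - w‖) : ℂ)
          * Complex.exp (-2 * (Real.pi:ℂ) * Complex.I * (k:ℂ) * (θ:ℝ))
        = ((Real.log r : ℂ)) * Complex.exp (-2 * (Real.pi:ℂ) * Complex.I * (k:ℂ) * (θ:ℝ))
          + ((Real.log (‖1 - w⁻¹ * Complex.exp (2 * (Real.pi:ℂ) * Complex.I * (θ:ℝ))‖) : ℂ))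
            * Complex.exp (-2 * (Real.pi:ℂ) * Complex.I * (k:ℂ) * (θ:ℝ)) := by
      intro θ
      have hfac : Complex.exp (2 * (Real.pi:ℂ) * Complex.I * (θ:ℝ)) - w
          = w * (w⁻¹ * Complex.exp (2 * (Real.pi:ℂ) * Complex.I * (θ:ℝ)) - 1) := by
        field_simp
      rw [hfac, norm_mul, habsw, norm_sub_rev, Real.log_mul hr.ne'
        (norm_ne_zero_iff.mpr (hne θ))]
      push_cast
      ring
    rw [intervalIntegral.integral_congr (fun θ _ => hlog θ)]
    have hcontg : Continuous fun θ : ℝ =>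
        Real.log (‖1 - w⁻¹ * Complex.exp (2 * (Real.pi:ℂ) * Complex.I * (θ:ℝ))‖) := by
      rw [continuous_iff_continuousAt]
      intro θ
      have hinner : Continuous fun θ : ℝ =>
          ‖1 - w⁻¹ * Complex.exp (2 * (Real.pi:ℂ) * Complex.I * (θ:ℝ))‖ := by
        apply continuous_norm.comp
        fun_prop
      exact hinner.continuousAt.log (norm_ne_zero_iff.mpr (hne θ))
    have hint1 : IntervalIntegrable (fun θ : ℝ => ((Real.log r : ℂ))
        * Complex.exp (-2 * (Real.pi:ℂ) * Complex.I * (k:ℂ) * (θ:ℝ))) MeasureTheory.volume 0 1 :=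
      (by fun_prop : Continuous _).intervalIntegrable 0 1
    have hint2 : IntervalIntegrable (fun θ : ℝ =>
        ((Real.log (‖1 - w⁻¹ * Complex.exp (2 * (Real.pi:ℂ) * Complex.I * (θ:ℝ))‖) : ℂ))
          * Complex.exp (-2 * (Real.pi:ℂ) * Complex.I * (k:ℂ) * (θ:ℝ))) MeasureTheory.volume 0 1 :=
      ((Complex.continuous_ofReal.comp hcontg).mul (by fun_prop)).intervalIntegrable 0 1
    rw [intervalIntegral.integral_add hint1 hint2, intervalIntegral.integral_const_mul]
    have horth : (∫ θ in (0:ℝ)..1, Complex.exp (-2 * (Real.pi:ℂ) * Complex.I * (k:ℂ) * (θ:ℝ))) = 0 := by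
      rw [intervalIntegral.integral_congr (fun θ _ => show
        Complex.exp (-2 * (Real.pi:ℂ) * Complex.I * (k:ℂ) * (θ:ℝ))
          = Complex.exp (2 * (Real.pi:ℂ) * Complex.I * (((-k : ℤ)):ℂ) * (θ:ℝ)) from by
            congr 1; push_cast; ring)]
      rw [orth' (-k), if_neg (neg_ne_zero.mpr hk)]
    rw [horth, mul_zero, zero_add]
    have key := coeff w⁻¹ hainv k hk
    rw [key]
    have hzp : (r:ℂ) ^ (-(n:ℤ)) = ((r:ℂ)⁻¹) ^ n := by
      rw [zpow_neg, zpow_natCast, inv_pow]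
    rw [hzp]
    have hwi : w⁻¹ = ((r:ℂ))⁻¹ * Complex.exp (-(2 * (Real.pi:ℂ) * Complex.I * (φ:ℝ))) := by
      rw [hw, mul_inv, ← Complex.exp_neg]
    have hcwi : (starRingEnd ℂ) w⁻¹ = ((r:ℂ))⁻¹ * Complex.exp (2 * (Real.pi:ℂ) * Complex.I * (φ:ℝ)) := by
      rw [map_inv₀, hcw, mul_inv, ← Complex.exp_neg, neg_neg]
    rcases lt_or_gt_of_ne hk with hneg | hpos
    · have hkc : (k:ℂ) = -(n:ℂ) := by
        have h1 : (n:ℤ) = -k := by omega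
        have h2 := congrArg (fun x : ℤ => (x:ℂ)) h1
        push_cast at h2 ⊢
        linear_combination h2
      rw [if_neg (by omega), hcwi, mul_pow, ← Complex.exp_nat_mul,
        show -2 * (Real.pi:ℂ) * Complex.I * (k:ℂ) * (φ:ℂ)
          = (n:ℂ) * (2 * (Real.pi:ℂ) * Complex.I * (φ:ℝ)) from by rw [hkc]; push_cast; ring]
      ring
    · have hkc : (k:ℂ) = (n:ℂ) := by
        have h1 : (n:ℤ) = k := by omega
        have h2 := congrArg (fun x : ℤ => (x:ℂ)) h1
        push_cast at h2 ⊢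
        linear_combination -h2
      rw [if_pos hpos, hwi, mul_pow, ← Complex.exp_nat_mul,
        show -2 * (Real.pi:ℂ) * Complex.I * (k:ℂ) * (φ:ℂ)
          = (n:ℂ) * (-(2 * (Real.pi:ℂ) * Complex.I * (φ:ℝ))) from by rw [hkc]; push_cast; ring]
      ring


end
end
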